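/- arXiv:2309.02475 — 5 statements merged into one kernel-verified Lean document; each statement's English description precedes it below -/
import Mathlib

section
/- Let X be a geometric random variable on the nonnegative integers with P[X = k] = p^k q for k ≥ 0, where p ∈ (0,1) and q = 1 - p. Then for every s ∈ (0,1), E[(qX)^s] ≤ p, i.e. ∑_{k ≥ 1} k^s p^k q ≤ p q^{-s}. -/
/-- For a geometric random variable `X` on `ℕ` with `P[X = k] = p^k q`
(`q = 1 - p`), and any `s ∈ (0,1)`, we have `E[(qX)^s] ≤ p`, i.e.
`∑_{k ≥ 0} k^s p^k q ≤ p q^{-s}`. -/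
theorem geometric_rpow_moment_le (p s : ℝ) (hp0 : 0 < p) (hp1 : p < 1)
    (hs0 : 0 < s) (hs1 : s < 1) :
    (∑' k : ℕ, ((1 - p) * (k : ℝ)) ^ s * p ^ k * (1 - p)) ≤ p ∧
    (∑' k : ℕ, (k : ℝ) ^ s * p ^ k * (1 - p)) ≤ p * (1 - p) ^ (-s) := by
  have hq0 : (0:ℝ) < 1 - p := by linarith
  have hpn : ‖p‖ < 1 := by rw [Real.norm_eq_abs, abs_of_pos hp0]; exact hp1
  set q : ℝ := 1 - p with hq
  have hsum_geom : Summable (fun k : ℕ => p ^ k) :=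
    summable_geometric_of_lt_one hp0.le hp1
  have hsum_lin : Summable (fun k : ℕ => (k : ℝ) * p ^ k) := by
    simpa using summable_pow_mul_geometric_of_norm_lt_one 1 hpn
  have hlin : (∑' k : ℕ, (k : ℝ) * p ^ k) = p / q ^ 2 :=
    tsum_coe_mul_geometric_of_norm_lt_one hpn
  have hgeo : (∑' k : ℕ, p ^ k) = q⁻¹ := tsum_geometric_of_lt_one hp0.le hp1
  set f : ℕ → ℝ := fun k => (q * (k : ℝ)) ^ s * p ^ k * q with hf_def
  set g : ℕ → ℝ := fun k => (s * (q * (k : ℝ)) + (1 - s)) * p ^ k * q with hg_def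
  -- pointwise AM-GM bound
  have key : ∀ k : ℕ, (q * (k : ℝ)) ^ s ≤ s * (q * (k : ℝ)) + (1 - s) := by
    intro k
    have h := Real.geom_mean_le_arith_mean2_weighted hs0.le (by linarith : (0:ℝ) ≤ 1 - s)
      (by positivity : (0:ℝ) ≤ q * (k : ℝ)) zero_le_one (by ring)
    simpa using h
  have hfg : ∀ k, f k ≤ g k := by
    intro k
    have hk : (0:ℝ) ≤ p ^ k * q := by positivity
    have := mul_le_mul_of_nonneg_right (key k) hk
    simpa [hf_def, hg_def, mul_assoc] using this
  have hf_nonneg : ∀ k, 0 ≤ f k := by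
    intro k
    have : (0:ℝ) ≤ q * (k : ℝ) := by positivity
    simp only [hf_def]
    positivity
  have hsum_g : Summable g := by
    have : g = fun k : ℕ => (s * q * q) * ((k : ℝ) * p ^ k) + ((1 - s) * q) * p ^ k := by
      funext k; simp only [hg_def]; ring
    rw [this]
    exact (hsum_lin.mul_left _).add (hsum_geom.mul_left _)
  have hsum_f : Summable f := Summable.of_nonneg_of_le hf_nonneg hfg hsum_g
  -- shifted sums
  have hshift_lin : (∑' k : ℕ, ((k : ℝ) + 1) * p ^ (k + 1)) = p / q ^ 2 := by
    have h0 := Summable.tsum_eq_zero_add hsum_lin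
    rw [hlin] at h0
    have : (∑' k : ℕ, (((k:ℕ) + 1 : ℕ) : ℝ) * p ^ (k + 1))
        = ∑' k : ℕ, ((k : ℝ) + 1) * p ^ (k + 1) := by
      apply tsum_congr; intro k; push_cast; ring
    simpa [this] using h0.symm
  have hshift_geom : (∑' k : ℕ, p ^ (k + 1)) = p * q⁻¹ := by
    have : (∑' k : ℕ, p ^ (k + 1)) = ∑' k : ℕ, p * p ^ k := by
      apply tsum_congr; intro k; ring
    rw [this, tsum_mul_left, hgeo]
  -- main bound
  have hmain : (∑' k : ℕ, f k) ≤ p := by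
    have hsum_f1 : Summable (fun k : ℕ => f (k + 1)) := by
      exact (summable_nat_add_iff 1).2 hsum_f
    have hsum_g1 : Summable (fun k : ℕ => g (k + 1)) := by
      exact (summable_nat_add_iff 1).2 hsum_g
    have hzero : f 0 = 0 := by
      simp [hf_def, Real.zero_rpow hs0.ne']
    rw [Summable.tsum_eq_zero_add hsum_f, hzero, zero_add]
    have h1 : (∑' k : ℕ, f (k + 1)) ≤ ∑' k : ℕ, g (k + 1) :=
      Summable.tsum_le_tsum (fun k => hfg (k + 1)) hsum_f1 hsum_g1
    have h2 : (∑' k : ℕ, g (k + 1)) = p := by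
      have hg1 : (fun k : ℕ => g (k + 1))
          = fun k : ℕ => (s * q * q) * (((k : ℝ) + 1) * p ^ (k + 1))
            + ((1 - s) * q) * p ^ (k + 1) := by
        funext k; simp only [hg_def]; push_cast; ring
      have hs1' : Summable (fun k : ℕ => (s * q * q) * (((k : ℝ) + 1) * p ^ (k + 1))) := by
        apply Summable.mul_left
        exact ((summable_nat_add_iff 1).2 hsum_lin).congr (fun k => by push_cast; ring)
      have hs2' : Summable (fun k : ℕ => ((1 - s) * q) * p ^ (k + 1)) :=
        ((summable_nat_add_iff 1).2 hsum_geom).mul_left _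
      rw [hg1, Summable.tsum_add hs1' hs2', tsum_mul_left, tsum_mul_left, hshift_lin, hshift_geom]
      field_simp
      ring
    linarith
  refine ⟨hmain, ?_⟩
  -- second part
  have hfactor : (∑' k : ℕ, f k) = q ^ s * ∑' k : ℕ, (k : ℝ) ^ s * p ^ k * q := by
    rw [← tsum_mul_left]
    apply tsum_congr; intro k
    simp only [hf_def]
    rw [Real.mul_rpow hq0.le (Nat.cast_nonneg k)]
    ring
  have hqs : (0:ℝ) < q ^ s := Real.rpow_pos_of_pos hq0 s
  have hT : q ^ s * (∑' k : ℕ, (k : ℝ) ^ s * p ^ k * q) ≤ p := by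
    rw [← hfactor]; exact hmain
  rw [Real.rpow_neg hq0.le, ← div_eq_mul_inv]
  rw [le_div_iff₀ hqs]
  linarith [hT]
end

section
/- Let X be a geometric random variable taking values in the positive integers with P[X = k] = q^{k-1} p for k ≥ 1, where p ∈ (0,1) and q = 1 - p. Then for every s ∈ (0,1), E[(pX)^{-s}] ≤ Γ(1-s). Equivalently, ∑_{k ≥ 1} k^{-s} q^k p ≤ Γ(1-s) · q p^s. -/
open MeasureTheory Set Real

namespace GeomAux

lemma rpow_exp_integrable {s r : ℝ} (hs : 0 < s) (hr : 0 < r) :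
    IntegrableOn (fun t : ℝ => t ^ (s - 1) * Real.exp (-(r * t))) (Ioi 0) := by
  have h := integrableOn_rpow_mul_exp_neg_mul_rpow (p := 1) (s := s - 1) (b := r)
    (by linarith) one_pos hr
  refine h.congr_fun (fun t ht => ?_) measurableSet_Ioi
  beta_reduce
  rw [Real.rpow_one, neg_mul]

lemma lint_exp {s : ℝ} (hs : 0 < s) {r : ℝ} (hr : 0 < r) :
    ∫⁻ t in Ioi 0, ENNReal.ofReal (t ^ (s - 1) * Real.exp (-(r * t)))
      = ENNReal.ofReal ((1 / r) ^ s * Real.Gamma s) := by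
  rw [← ofReal_integral_eq_lintegral_ofReal (rpow_exp_integrable hs hr) ?_]
  · rw [integral_rpow_mul_exp_neg_mul_Ioi hs hr]
  · filter_upwards [ae_restrict_mem measurableSet_Ioi] with t ht
    have h0 : (0:ℝ) < t := ht
    positivity

lemma lint_exp' {r : ℝ} (hr : 0 < r) :
    ∫⁻ y in Ioi (0:ℝ), ENNReal.ofReal (Real.exp (-(r * y))) = ENNReal.ofReal r⁻¹ := by
  have h := lint_exp (s := 1) one_pos hr
  simp only [sub_self, Real.rpow_zero, one_mul, Real.Gamma_one, mul_one, Real.rpow_one,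
    one_div] at h
  exact h

lemma beta_lint {s : ℝ} (hs0 : 0 < s) (hs1 : s < 1) :
    ∫⁻ t in Ioi (0:ℝ), ENNReal.ofReal (t ^ (s - 1) * (1 + t)⁻¹)
      = ENNReal.ofReal (Real.Gamma s) * ENNReal.ofReal (Real.Gamma (1 - s)) := by
  have hmeas : AEMeasurable (Function.uncurry fun t y : ℝ =>
      ENNReal.ofReal (t ^ (s - 1) * Real.exp (-((1 + t) * y))))
      ((volume.restrict (Ioi (0:ℝ))).prod (volume.restrict (Ioi (0:ℝ)))) := by
    apply Measurable.aemeasurable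
    apply ENNReal.measurable_ofReal.comp
    fun_prop
  have step1 : ∫⁻ t in Ioi (0:ℝ), ENNReal.ofReal (t ^ (s - 1) * (1 + t)⁻¹)
      = ∫⁻ t in Ioi (0:ℝ), ∫⁻ y in Ioi (0:ℝ),
          ENNReal.ofReal (t ^ (s - 1) * Real.exp (-((1 + t) * y))) := by
    refine setLIntegral_congr_fun measurableSet_Ioi (fun t ht => ?_)
    have h0 : (0:ℝ) < t := ht
    have h1t : (0:ℝ) < 1 + t := by linarith
    calc ENNReal.ofReal (t ^ (s - 1) * (1 + t)⁻¹)
        = ENNReal.ofReal (t ^ (s - 1)) * ENNReal.ofReal ((1 + t)⁻¹) := by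
          rw [ENNReal.ofReal_mul (by positivity)]
      _ = ENNReal.ofReal (t ^ (s - 1)) *
          ∫⁻ y in Ioi (0:ℝ), ENNReal.ofReal (Real.exp (-((1 + t) * y))) := by
          rw [lint_exp' h1t]
      _ = _ := by
          rw [← lintegral_const_mul' _ _ ENNReal.ofReal_ne_top]
          refine lintegral_congr fun y => ?_
          rw [← ENNReal.ofReal_mul (by positivity)]
  have step2 : ∫⁻ t in Ioi (0:ℝ), ∫⁻ y in Ioi (0:ℝ),
          ENNReal.ofReal (t ^ (s - 1) * Real.exp (-((1 + t) * y)))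
      = ∫⁻ y in Ioi (0:ℝ), ∫⁻ t in Ioi (0:ℝ),
          ENNReal.ofReal (t ^ (s - 1) * Real.exp (-((1 + t) * y))) :=
    lintegral_lintegral_swap hmeas
  have step3 : ∫⁻ y in Ioi (0:ℝ), ∫⁻ t in Ioi (0:ℝ),
          ENNReal.ofReal (t ^ (s - 1) * Real.exp (-((1 + t) * y)))
      = ∫⁻ y in Ioi (0:ℝ), ENNReal.ofReal (Real.Gamma s * (Real.exp (-y) * y ^ (-s))) := by
    refine setLIntegral_congr_fun measurableSet_Ioi (fun y hy => ?_)
    have h0 : (0:ℝ) < y := hy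
    have key : ∀ t : ℝ, t ^ (s - 1) * Real.exp (-((1 + t) * y))
        = Real.exp (-y) * (t ^ (s - 1) * Real.exp (-(y * t))) := by
      intro t
      rw [show -((1 + t) * y) = -y + -(y * t) by ring, Real.exp_add]
      ring
    simp_rw [key]
    have := lint_exp hs0 h0
    calc ∫⁻ t in Ioi (0:ℝ),
          ENNReal.ofReal (Real.exp (-y) * (t ^ (s - 1) * Real.exp (-(y * t))))
        = ENNReal.ofReal (Real.exp (-y)) * ∫⁻ t in Ioi (0:ℝ),
            ENNReal.ofReal (t ^ (s - 1) * Real.exp (-(y * t))) := by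
          rw [← lintegral_const_mul' _ _ ENNReal.ofReal_ne_top]
          refine lintegral_congr fun t => ?_
          rw [← ENNReal.ofReal_mul (Real.exp_nonneg _)]
      _ = ENNReal.ofReal (Real.exp (-y)) * ENNReal.ofReal ((1 / y) ^ s * Real.Gamma s) := by
          rw [this]
      _ = _ := by
          rw [← ENNReal.ofReal_mul (Real.exp_nonneg _)]
          congr 1
          rw [one_div, Real.inv_rpow h0.le, ← Real.rpow_neg h0.le]
          ring
  rw [step1, step2, step3]
  have hint : IntegrableOn (fun y : ℝ => Real.exp (-y) * y ^ ((1-s) - 1)) (Ioi 0) :=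
    Real.GammaIntegral_convergent (by linarith)
  have : ∫⁻ y in Ioi (0:ℝ), ENNReal.ofReal (Real.exp (-y) * y ^ (-s))
      = ENNReal.ofReal (Real.Gamma (1 - s)) := by
    rw [Real.Gamma_eq_integral (by linarith : (0:ℝ) < 1 - s)]
    rw [ofReal_integral_eq_lintegral_ofReal hint ?_]
    · refine setLIntegral_congr_fun measurableSet_Ioi
        (fun y hy => ?_)
      norm_num
    · filter_upwards [ae_restrict_mem measurableSet_Ioi] with y hy
      have h0 : (0:ℝ) < y := hy
      positivity
  calc ∫⁻ y in Ioi (0:ℝ), ENNReal.ofReal (Real.Gamma s * (Real.exp (-y) * y ^ (-s)))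
      = ENNReal.ofReal (Real.Gamma s) * ∫⁻ y in Ioi (0:ℝ),
          ENNReal.ofReal (Real.exp (-y) * y ^ (-s)) := by
        rw [← lintegral_const_mul' _ _ ENNReal.ofReal_ne_top]
        refine lintegral_congr fun y => ?_
        rw [← ENNReal.ofReal_mul (Real.Gamma_nonneg_of_nonneg hs0.le)]
    _ = _ := by rw [this]

lemma laplace_bound {p t : ℝ} (hp0 : 0 < p) (hp1 : p < 1) (ht : 0 < t) :
    p * Real.exp (-(p * t)) * (1 - (1 - p) * Real.exp (-(p * t)))⁻¹ ≤ (1 + t)⁻¹ := by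
  set e := Real.exp (-(p * t)) with he
  have he0 : 0 < e := Real.exp_pos _
  have he1 : e ≤ 1 := Real.exp_le_one_iff.mpr (by nlinarith)
  have hqe : (1 - p) * e < 1 := by nlinarith
  have hmain : p * e * (1 + t) ≤ 1 - (1 - p) * e := by
    have h1 : (1 + p * t) * e ≤ 1 := by
      have h2 : 1 + p * t ≤ Real.exp (p * t) := Real.add_one_le_exp _ |>.trans_eq' (by ring_nf)
      have h3 : Real.exp (p * t) * e = 1 := by
        rw [he, ← Real.exp_add]; simp
      nlinarith
    nlinarith
  have h4 : 0 < 1 - (1 - p) * e := by linarith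
  rw [← div_eq_mul_inv, ← one_div (1 + t), div_le_div_iff₀ h4 (by linarith)]
  nlinarith

end GeomAux

open GeomAux in
/-- For a geometric random variable `X` on the positive integers with
`P[X = k] = q^{k-1} p` (`q = 1 - p`), and any `s ∈ (0,1)`, we have
`E[(pX)^{-s}] ≤ Γ(1-s)`; equivalently `∑_{k ≥ 1} k^{-s} q^k p ≤ Γ(1-s) q p^s`. -/
theorem geometric_neg_rpow_moment_le (p s : ℝ) (hp0 : 0 < p) (hp1 : p < 1)
    (hs0 : 0 < s) (hs1 : s < 1) :
    (∑' k : ℕ, (p * ((k : ℝ) + 1)) ^ (-s) * (1 - p) ^ k * p) ≤ Real.Gamma (1 - s) ∧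
    (∑' k : ℕ, ((k : ℝ) + 1) ^ (-s) * (1 - p) ^ (k + 1) * p) ≤
      Real.Gamma (1 - s) * (1 - p) * p ^ s := by
  have hq0 : (0:ℝ) < 1 - p := by linarith
  have hq1 : 1 - p < 1 := by linarith
  have hG : 0 < Real.Gamma s := Real.Gamma_pos_of_pos hs0
  have hG1 : 0 < Real.Gamma (1 - s) := Real.Gamma_pos_of_pos (by linarith)
  set a : ℕ → ℝ := fun k => (p * ((k : ℝ) + 1)) ^ (-s) * (1 - p) ^ k * p with ha
  have ha_nonneg : ∀ k, 0 ≤ a k := fun k => by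
    have h1 : (0:ℝ) < p * ((k:ℝ)+1) := by positivity
    simp only [ha]
    positivity
  have hsum : Summable a := by
    refine Summable.of_nonneg_of_le ha_nonneg (fun k => ?_)
      (((summable_geometric_of_lt_one hq0.le hq1).mul_left (p ^ (-s))).mul_right p)
    have h1 : p ≤ p * ((k:ℝ)+1) := by nlinarith [Nat.cast_nonneg (α := ℝ) k]
    have h2 : (p * ((k:ℝ)+1)) ^ (-s) ≤ p ^ (-s) :=
      Real.rpow_le_rpow_of_nonpos hp0 h1 (by linarith)
    have h3 : (0:ℝ) ≤ (1-p)^k * p := by positivity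
    calc a k = (p * ((k:ℝ)+1)) ^ (-s) * ((1-p)^k * p) := by simp only [ha]; ring
      _ ≤ p ^ (-s) * ((1-p)^k * p) := mul_le_mul_of_nonneg_right h2 h3
      _ = p ^ (-s) * (1-p)^k * p := by ring
  have main : (∑' k, a k) ≤ Real.Gamma (1 - s) := by
    have key : ENNReal.ofReal (Real.Gamma s) * ENNReal.ofReal (∑' k, a k)
        ≤ ENNReal.ofReal (Real.Gamma s) * ENNReal.ofReal (Real.Gamma (1 - s)) := by
      calc ENNReal.ofReal (Real.Gamma s) * ENNReal.ofReal (∑' k, a k)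
          = ENNReal.ofReal (∑' k, Real.Gamma s * a k) := by
            rw [← ENNReal.ofReal_mul hG.le]
            congr 1
            exact tsum_mul_left.symm
        _ = ∑' k, ENNReal.ofReal (Real.Gamma s * a k) :=
            ENNReal.ofReal_tsum_of_nonneg (fun k => mul_nonneg hG.le (ha_nonneg k))
              (hsum.mul_left _)
        _ = ∑' k : ℕ, ∫⁻ t in Ioi (0:ℝ), ENNReal.ofReal
              (((1-p)^k * p) * (t ^ (s-1) * Real.exp (-((p * ((k:ℝ)+1)) * t)))) := by
            refine tsum_congr fun k => ?_
            have hr : 0 < p * ((k:ℝ)+1) := by positivity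
            have hc : (0:ℝ) ≤ (1-p)^k * p := by positivity
            calc ENNReal.ofReal (Real.Gamma s * a k)
                = ENNReal.ofReal ((1-p)^k * p) *
                    ENNReal.ofReal ((1 / (p * ((k:ℝ)+1))) ^ s * Real.Gamma s) := by
                  rw [← ENNReal.ofReal_mul hc]
                  congr 1
                  rw [one_div, Real.inv_rpow hr.le, ← Real.rpow_neg hr.le]
                  simp only [ha]; ring
              _ = ENNReal.ofReal ((1-p)^k * p) * ∫⁻ t in Ioi (0:ℝ),
                    ENNReal.ofReal (t ^ (s-1) * Real.exp (-((p * ((k:ℝ)+1)) * t))) := by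
                  rw [lint_exp hs0 hr]
              _ = _ := by
                  rw [← lintegral_const_mul' _ _ ENNReal.ofReal_ne_top]
                  exact lintegral_congr fun t => by
                    rw [← ENNReal.ofReal_mul hc]
        _ = ∫⁻ t in Ioi (0:ℝ), ∑' k : ℕ, ENNReal.ofReal
              (((1-p)^k * p) * (t ^ (s-1) * Real.exp (-((p * ((k:ℝ)+1)) * t)))) := by
            have hm : ∀ k : ℕ, AEMeasurable (fun t : ℝ => ENNReal.ofReal
                (((1-p)^k * p) * (t ^ (s-1) * Real.exp (-((p * ((k:ℝ)+1)) * t)))))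
                (volume.restrict (Ioi (0:ℝ))) := fun k =>
              (ENNReal.measurable_ofReal.comp (by fun_prop)).aemeasurable
            exact (lintegral_tsum hm).symm
        _ ≤ ∫⁻ t in Ioi (0:ℝ), ENNReal.ofReal (t ^ (s-1) * (1 + t)⁻¹) := by
            refine lintegral_mono_ae ?_
            filter_upwards [ae_restrict_mem measurableSet_Ioi] with t ht
            have ht0 : (0:ℝ) < t := ht
            set x : ℝ := (1 - p) * Real.exp (-(p * t)) with hx
            set c : ℝ := t ^ (s-1) * (p * Real.exp (-(p * t))) with hc
            have hx0 : 0 ≤ x := by positivity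
            have hx1 : x < 1 := by
              have : Real.exp (-(p * t)) ≤ 1 := Real.exp_le_one_iff.mpr (by nlinarith)
              nlinarith
            have hc0 : 0 ≤ c := by positivity
            have hterm : ∀ k : ℕ, ((1-p)^k * p) * (t ^ (s-1)
                * Real.exp (-((p * ((k:ℝ)+1)) * t))) = c * x ^ k := by
              intro k
              have hexp : Real.exp (-((p * ((k:ℝ)+1)) * t))
                  = Real.exp (-(p * t)) * Real.exp (-(p * t)) ^ k := by
                rw [← Real.exp_nat_mul, ← Real.exp_add]
                congr 1
                ring
              rw [hexp]
              simp only [hc, hx, mul_pow]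
              ring
            simp_rw [hterm]
            have hsum2 : Summable (fun k : ℕ => c * x ^ k) :=
              (summable_geometric_of_lt_one hx0 hx1).mul_left c
            rw [← ENNReal.ofReal_tsum_of_nonneg (fun k => by positivity) hsum2]
            rw [tsum_mul_left, tsum_geometric_of_lt_one hx0 hx1]
            apply ENNReal.ofReal_le_ofReal
            calc c * (1 - x)⁻¹
                = t ^ (s-1) * (p * Real.exp (-(p * t)) * (1 - x)⁻¹) := by
                  simp only [hc]; ring
              _ ≤ t ^ (s-1) * (1 + t)⁻¹ := by
                  refine mul_le_mul_of_nonneg_left ?_ (by positivity)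
                  exact laplace_bound hp0 hp1 ht0
        _ = _ := beta_lint hs0 hs1
    have h5 := (ENNReal.mul_le_mul_iff_right (a := ENNReal.ofReal (Real.Gamma s))
      (ENNReal.ofReal_pos.mpr hG).ne' ENNReal.ofReal_ne_top).mp key
    exact (ENNReal.ofReal_le_ofReal_iff hG1.le).mp h5
  refine ⟨main, ?_⟩
  have hterm2 : ∀ k : ℕ, ((k:ℝ)+1) ^ (-s) * (1-p) ^ (k+1) * p
      = a k * ((1-p) * p ^ s) := by
    intro k
    have hk1 : (0:ℝ) ≤ (k:ℝ)+1 := by positivity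
    have h1 : (p * ((k:ℝ)+1)) ^ (-s) = p ^ (-s) * ((k:ℝ)+1) ^ (-s) :=
      Real.mul_rpow hp0.le hk1
    have h2 : p ^ (-s) * p ^ s = 1 := by
      rw [← Real.rpow_add hp0]; simp
    calc ((k:ℝ)+1) ^ (-s) * (1-p) ^ (k+1) * p
        = (p ^ (-s) * p ^ s) * (((k:ℝ)+1) ^ (-s) * ((1-p) ^ k * (1-p)) * p) := by
          rw [h2, pow_succ]; ring
      _ = (p ^ (-s) * ((k:ℝ)+1) ^ (-s) * (1-p) ^ k * p) * ((1-p) * p ^ s) := by ring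
      _ = a k * ((1-p) * p ^ s) := by rw [ha, ← h1]
  calc (∑' k : ℕ, ((k:ℝ)+1) ^ (-s) * (1-p) ^ (k+1) * p)
      = (∑' k, a k) * ((1-p) * p ^ s) := by
        rw [← tsum_mul_right]
        exact tsum_congr hterm2
    _ ≤ Real.Gamma (1-s) * ((1-p) * p ^ s) :=
        mul_le_mul_of_nonneg_right main (by positivity)
    _ = Real.Gamma (1-s) * (1-p) * p ^ s := by ring
end

section
/- For p ∈ (0,1), q = 1-p, and s ∈ (0,1), the quantity (q/p)^s · (∑_{k ≥ 1} k^s p^k q + ∑_{k ≥ 1} k^{-s} q^k p) is bounded above by p^{1-s} + Γ(1-s) q^{1+s}, which in turn is at most 2·max(1, Γ(1-s)), a constant independent of p. -/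
open Real MeasureTheory Set


lemma lint_gamma {a r : ℝ} (ha : 0 < a) (hr : 0 < r) :
    ∫⁻ t in Ioi (0:ℝ), ENNReal.ofReal (t ^ (a-1) * Real.exp (-(r * t))) =
      ENNReal.ofReal ((1/r) ^ a * Real.Gamma a) := by
  rw [← integral_rpow_mul_exp_neg_mul_Ioi ha hr]
  rw [← MeasureTheory.ofReal_integral_eq_lintegral_ofReal]
  · have : IntegrableOn (fun x : ℝ => x ^ (a-1) * Real.exp (-r * x ^ (1:ℝ))) (Ioi 0) :=
      integrableOn_rpow_mul_exp_neg_mul_rpow (by linarith) one_pos hr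
    refine this.congr_fun (fun x hx => ?_) measurableSet_Ioi
    beta_reduce
    rw [Real.rpow_one, neg_mul]
  · filter_upwards [ae_restrict_mem measurableSet_Ioi] with t ht
    have : (0:ℝ) < t := ht
    positivity

lemma lint_exp (r : ℝ) (hr : 0 < r) :
    ∫⁻ u in Ioi (0:ℝ), ENNReal.ofReal (Real.exp (-(r * u))) = ENNReal.ofReal (1/r) := by
  have := lint_gamma one_pos hr
  simp only [sub_self, Real.rpow_zero, one_mul, Real.Gamma_one, Real.rpow_one, mul_one] at this
  exact this

lemma lint_beta {s p : ℝ} (hs0 : 0 < s) (hs1 : s < 1) (hp : 0 < p) :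
    ∫⁻ t in Ioi (0:ℝ), ENNReal.ofReal (t ^ (s-1) / (p + t)) =
      ENNReal.ofReal (Real.Gamma s * Real.Gamma (1-s) * p ^ (s-1)) := by
  have hmeas : Measurable (Function.uncurry fun t u : ℝ =>
      ENNReal.ofReal (t ^ (s-1) * Real.exp (-((p + t) * u)))) := by
    unfold Function.uncurry; fun_prop
  calc ∫⁻ t in Ioi (0:ℝ), ENNReal.ofReal (t ^ (s-1) / (p + t))
      = ∫⁻ t in Ioi (0:ℝ), ∫⁻ u in Ioi (0:ℝ),
          ENNReal.ofReal (t ^ (s-1) * Real.exp (-((p + t) * u))) := by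
        refine setLIntegral_congr_fun measurableSet_Ioi (fun t ht => ?_)
        have ht0 : (0:ℝ) < t := ht
        have hpt : 0 < p + t := by linarith
        have : ∀ u : ℝ, ENNReal.ofReal (t ^ (s-1) * Real.exp (-((p + t) * u))) =
            ENNReal.ofReal (t ^ (s-1)) * ENNReal.ofReal (Real.exp (-((p + t) * u))) := by
          intro u; rw [ENNReal.ofReal_mul (by positivity)]
        simp_rw [this]
        rw [lintegral_const_mul _ (by fun_prop), lint_exp _ hpt,
          ← ENNReal.ofReal_mul (by positivity), mul_one_div]
    _ = ∫⁻ u in Ioi (0:ℝ), ∫⁻ t in Ioi (0:ℝ),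
          ENNReal.ofReal (t ^ (s-1) * Real.exp (-((p + t) * u))) :=
        lintegral_lintegral_swap hmeas.aemeasurable
    _ = ∫⁻ u in Ioi (0:ℝ), ENNReal.ofReal (Real.exp (-(p * u))) *
          ENNReal.ofReal ((1/u) ^ s * Real.Gamma s) := by
        refine setLIntegral_congr_fun measurableSet_Ioi (fun u hu => ?_)
        have hu0 : (0:ℝ) < u := hu
        have : ∀ t : ℝ, ENNReal.ofReal (t ^ (s-1) * Real.exp (-((p + t) * u))) =
            ENNReal.ofReal (Real.exp (-(p * u))) *
              ENNReal.ofReal (t ^ (s-1) * Real.exp (-(u * t))) := by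
          intro t
          rw [← ENNReal.ofReal_mul (by positivity)]
          congr 1
          rw [show -((p+t)*u) = -(p*u) + -(u*t) by ring, Real.exp_add]
          ring
        simp_rw [this]
        rw [lintegral_const_mul _ (by fun_prop), lint_gamma hs0 hu0]
    _ = ENNReal.ofReal (Real.Gamma s) *
          ∫⁻ u in Ioi (0:ℝ), ENNReal.ofReal (u ^ ((1-s)-1) * Real.exp (-(p * u))) := by
        rw [← lintegral_const_mul _ (by fun_prop)]
        refine setLIntegral_congr_fun measurableSet_Ioi (fun u hu => ?_)
        have hu0 : (0:ℝ) < u := hu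
        rw [← ENNReal.ofReal_mul (by positivity), ← ENNReal.ofReal_mul (by positivity)]
        congr 1
        have h1u : (1/u) ^ s = u ^ (-s) := by
          rw [Real.rpow_neg hu0.le, one_div, Real.inv_rpow hu0.le]
        rw [h1u, show (1-s)-1 = -s by ring]
        ring
    _ = ENNReal.ofReal (Real.Gamma s * Real.Gamma (1-s) * p ^ (s-1)) := by
        rw [lint_gamma (by linarith) hp, ← ENNReal.ofReal_mul (Real.Gamma_pos_of_pos hs0).le]
        have h1p : (1/p) ^ (1-s) = p ^ (s-1) := by
          rw [one_div, Real.inv_rpow hp.le, ← Real.rpow_neg hp.le, neg_sub]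
        rw [h1p]
        ring_nf

lemma sumB {p s : ℝ} (hp0 : 0 < p) (hp1 : p < 1) (hs0 : 0 < s) (hs1 : s < 1) :
    ∑' k : ℕ, ((k:ℝ)+1) ^ (-s) * (1-p)^(k+1) ≤
      Real.Gamma (1-s) * (1-p) * p ^ (s-1) := by
  set q : ℝ := 1 - p with hq
  have hq0 : 0 < q := by simp [hq]; linarith
  have hq1 : q < 1 := by simp [hq]; linarith
  have hnn : ∀ k : ℕ, 0 ≤ ((k:ℝ)+1) ^ (-s) * q^(k+1) := fun k => by positivity
  have hsum : Summable (fun k : ℕ => ((k:ℝ)+1) ^ (-s) * q^(k+1)) := by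
    refine Summable.of_nonneg_of_le hnn (fun k => ?_)
      (((summable_geometric_of_lt_one hq0.le hq1).mul_left q).congr
        (fun k => (pow_succ' q k).symm))
    have h1 : ((k:ℝ)+1) ^ (-s) ≤ 1 :=
      Real.rpow_le_one_of_one_le_of_nonpos (by push_cast; linarith [Nat.cast_nonneg (α := ℝ) k])
        (by linarith)
    calc ((k:ℝ)+1) ^ (-s) * q^(k+1) ≤ 1 * q^(k+1) := by
          apply mul_le_mul_of_nonneg_right h1 (by positivity)
      _ = q^(k+1) := one_mul _
  set S : ℝ := ∑' k : ℕ, ((k:ℝ)+1) ^ (-s) * q^(k+1) with hS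
  have hSnn : 0 ≤ S := tsum_nonneg hnn
  have hGs : 0 < Real.Gamma s := Real.Gamma_pos_of_pos hs0
  have hG1s : 0 < Real.Gamma (1-s) := Real.Gamma_pos_of_pos (by linarith)
  -- key ENNReal chain
  have key : ENNReal.ofReal (S * Real.Gamma s) ≤
      ENNReal.ofReal (q * (Real.Gamma s * Real.Gamma (1-s) * p ^ (s-1))) := by
    calc ENNReal.ofReal (S * Real.Gamma s)
        = ∑' k : ℕ, ENNReal.ofReal (((k:ℝ)+1) ^ (-s) * q^(k+1) * Real.Gamma s) := by
          rw [hS, ← tsum_mul_right]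
          exact ENNReal.ofReal_tsum_of_nonneg (fun k => by positivity) (hsum.mul_right _)
      _ = ∑' k : ℕ, ∫⁻ t in Ioi (0:ℝ),
            ENNReal.ofReal (t ^ (s-1) * Real.exp (-(((k:ℝ)+1) * t)) * q^(k+1)) := by
          refine tsum_congr fun k => ?_
          have hk : (0:ℝ) < (k:ℝ)+1 := by positivity
          have := lint_gamma hs0 hk
          have h1 : ((1:ℝ)/((k:ℝ)+1)) ^ s = ((k:ℝ)+1) ^ (-s) := by
            rw [one_div, Real.inv_rpow (by positivity), ← Real.rpow_neg (by positivity)]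
          calc ENNReal.ofReal (((k:ℝ)+1) ^ (-s) * q^(k+1) * Real.Gamma s)
              = ENNReal.ofReal ((1/((k:ℝ)+1)) ^ s * Real.Gamma s) *
                  ENNReal.ofReal (q^(k+1)) := by
                rw [← ENNReal.ofReal_mul (by positivity), h1]; ring_nf
            _ = (∫⁻ t in Ioi (0:ℝ),
                  ENNReal.ofReal (t ^ (s-1) * Real.exp (-(((k:ℝ)+1) * t)))) *
                  ENNReal.ofReal (q^(k+1)) := by rw [this]
            _ = ∫⁻ t in Ioi (0:ℝ),
                  ENNReal.ofReal (t ^ (s-1) * Real.exp (-(((k:ℝ)+1) * t)) * q^(k+1)) := by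
                rw [← lintegral_mul_const _ (by fun_prop)]
                refine lintegral_congr fun t => ?_
                rw [← ENNReal.ofReal_mul' (by positivity)]
      _ = ∫⁻ t in Ioi (0:ℝ), ∑' k : ℕ,
            ENNReal.ofReal (t ^ (s-1) * Real.exp (-(((k:ℝ)+1) * t)) * q^(k+1)) :=
          (lintegral_tsum (fun k => by fun_prop)).symm
      _ ≤ ∫⁻ t in Ioi (0:ℝ), ENNReal.ofReal (q * (t ^ (s-1) / (p + t))) := by
          refine lintegral_mono_ae ?_
          filter_upwards [ae_restrict_mem measurableSet_Ioi] with t ht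
          have ht0 : (0:ℝ) < t := ht
          set x : ℝ := q * Real.exp (-t) with hx
          have hx0 : 0 ≤ x := by positivity
          have hext : Real.exp (-t) < 1 := Real.exp_lt_one_iff.mpr (by linarith)
          have hx1 : x < 1 := by
            calc x ≤ q * 1 := by apply mul_le_mul_of_nonneg_left hext.le hq0.le
              _ < 1 := by linarith
          have hterm : ∀ k : ℕ, t ^ (s-1) * Real.exp (-(((k:ℝ)+1) * t)) * q^(k+1) =
              (t ^ (s-1) * x) * x^k := by
            intro k
            have : Real.exp (-(((k:ℝ)+1) * t)) = Real.exp (-t) ^ (k+1) := by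
              rw [← Real.exp_nat_mul]; push_cast; ring_nf
            rw [this, hx, mul_pow, pow_succ', pow_succ']
            ring
          have hsum2 : ∑' k : ℕ, t ^ (s-1) * Real.exp (-(((k:ℝ)+1) * t)) * q^(k+1) =
              t ^ (s-1) * x * (1-x)⁻¹ := by
            simp_rw [hterm]
            rw [tsum_mul_left, tsum_geometric_of_lt_one hx0 hx1]
          calc ∑' k : ℕ, ENNReal.ofReal (t ^ (s-1) * Real.exp (-(((k:ℝ)+1) * t)) * q^(k+1))
              = ENNReal.ofReal (t ^ (s-1) * x * (1-x)⁻¹) := by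
                rw [← hsum2]
                exact (ENNReal.ofReal_tsum_of_nonneg (fun k => by positivity)
                  (by simp_rw [hterm]; exact (summable_geometric_of_lt_one hx0 hx1).mul_left _)).symm
            _ ≤ ENNReal.ofReal (q * (t ^ (s-1) / (p + t))) := by
                apply ENNReal.ofReal_le_ofReal
                have hd1 : 0 < 1 - x := by linarith
                have hd2 : 0 < p + t := by linarith
                have hept : 0 < Real.exp (-t) := Real.exp_pos _
                have hkey : Real.exp (-t) * (p + t) ≤ 1 - x := by
                  have h1t : 1 + t ≤ Real.exp t := by linarith [Real.add_one_le_exp t]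
                  have hprod : Real.exp (-t) * Real.exp t = 1 := by
                    rw [← Real.exp_add]; simp
                  have : Real.exp (-t) * (1 + t) ≤ 1 := by nlinarith [hept.le]
                  have hexpand : Real.exp (-t) * (p + t) + x = Real.exp (-t) * (1 + t) := by
                    rw [hx, hq]; ring
                  linarith
                have hbound : x * (1-x)⁻¹ ≤ q / (p + t) := by
                  rw [← div_eq_mul_inv, div_le_div_iff₀ hd1 hd2]
                  calc x * (p + t) = q * (Real.exp (-t) * (p + t)) := by rw [hx]; ring
                    _ ≤ q * (1 - x) := mul_le_mul_of_nonneg_left hkey hq0.le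
                calc t ^ (s-1) * x * (1-x)⁻¹ ≤ t ^ (s-1) * (q / (p+t)) := by
                      rw [mul_assoc]
                      exact mul_le_mul_of_nonneg_left hbound (by positivity)
                  _ = q * (t ^ (s-1) / (p+t)) := by ring
      _ = ENNReal.ofReal (q * (Real.Gamma s * Real.Gamma (1-s) * p ^ (s-1))) := by
          have : ∀ t : ℝ, ENNReal.ofReal (q * (t ^ (s-1) / (p + t))) =
              ENNReal.ofReal q * ENNReal.ofReal (t ^ (s-1) / (p + t)) := fun t =>
            ENNReal.ofReal_mul hq0.le
          simp_rw [this]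
          rw [lintegral_const_mul _ (by fun_prop), lint_beta hs0 hs1 hp0,
            ← ENNReal.ofReal_mul hq0.le]
  -- back to ℝ
  have hreal : S * Real.Gamma s ≤ q * (Real.Gamma s * Real.Gamma (1-s) * p ^ (s-1)) := by
    exact (ENNReal.ofReal_le_ofReal_iff (by positivity)).mp key
  have := le_of_mul_le_mul_right (by nlinarith [hreal] : S * Real.Gamma s ≤
      (Real.Gamma (1-s) * q * p ^ (s-1)) * Real.Gamma s) hGs
  linarith [this]


lemma sumA {p s : ℝ} (hp0 : 0 < p) (hp1 : p < 1) (hs0 : 0 < s) (hs1 : s < 1) :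
    ∑' k : ℕ, (k:ℝ) ^ s * p ^ k ≤ p * (1-p) ^ (-(1+s)) := by
  set q : ℝ := 1 - p with hq
  have hq0 : 0 < q := by simp [hq]; linarith
  have hnorm : ‖p‖ < 1 := by rw [Real.norm_eq_abs, abs_of_pos hp0]; exact hp1
  have hsum0 : Summable fun n : ℕ => (n:ℝ) * p^n := by
    simpa using (summable_pow_mul_geometric_of_norm_lt_one 1 hnorm :
      Summable fun n : ℕ => (n:ℝ)^1 * p^n)
  have hpq : (1/s).HolderConjugate (1/(1-s)) := by
    rw [Real.holderConjugate_iff]; constructor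
    · rw [lt_div_iff₀ hs0]; linarith
    · rw [one_div, inv_inv, one_div, inv_inv]; ring
  set f : ℕ → ℝ := fun k => (((k:ℝ)+1) * p^(k+1)) ^ s with hf
  set g : ℕ → ℝ := fun k => (p^(k+1) : ℝ) ^ (1-s) with hg
  have hfnn : ∀ k, 0 ≤ f k := fun k => by positivity
  have hgnn : ∀ k, 0 ≤ g k := fun k => by positivity
  have hfpow : ∀ k : ℕ, f k ^ (1/s) = ((k:ℝ)+1) * p^(k+1) := by
    intro k
    simp only [hf]
    rw [← Real.rpow_natCast p (k+1)]
    rw [← Real.rpow_mul (by positivity), mul_one_div, div_self hs0.ne']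
    rw [Real.rpow_one, Real.rpow_natCast]
  have hgpow : ∀ k : ℕ, g k ^ (1/(1-s)) = p^(k+1) := by
    intro k
    simp only [hg]
    rw [← Real.rpow_natCast p (k+1)]
    rw [← Real.rpow_mul (by positivity), mul_one_div, div_self (by linarith : (1:ℝ)-s ≠ 0)]
    rw [Real.rpow_one, Real.rpow_natCast]
  have hfg : ∀ k : ℕ, f k * g k = ((k:ℝ)+1) ^ s * p^(k+1) := by
    intro k
    simp only [hf, hg]
    rw [Real.mul_rpow (by positivity) (by positivity), mul_assoc]
    congr 1
    rw [← Real.rpow_natCast p (k+1), ← Real.rpow_mul hp0.le, ← Real.rpow_mul hp0.le,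
      ← Real.rpow_add hp0]
    congr 1; ring
  have hfsum : Summable fun k => f k ^ (1/s) := by
    refine Summable.congr ?_ (fun k => (hfpow k).symm)
    have h2 : Summable fun n : ℕ => ((n:ℝ)+1) * p^(n+1) := by
      apply ((summable_nat_add_iff 1).mpr hsum0).congr
      intro n; push_cast; ring
    exact h2
  have hgsum : Summable fun k => g k ^ (1/(1-s)) := by
    refine Summable.congr ?_ (fun k => (hgpow k).symm)
    exact ((summable_geometric_of_lt_one hp0.le hp1).mul_left p).congr
      (fun k => (pow_succ' p k).symm)
  obtain ⟨hsummul, hholder⟩ :=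
    Real.summable_and_inner_le_Lp_mul_Lq_tsum_of_nonneg hpq hfnn hgnn hfsum hgsum
  have e1 : ∑' k, f k ^ (1/s) = p / q^2 := by
    rw [tsum_congr hfpow]
    have hh : (∑' k : ℕ, ((k:ℝ)+1) * p^(k+1)) = ∑' k : ℕ, (k:ℝ) * p^k := by
      rw [hsum0.tsum_eq_zero_add]
      push_cast
      simp
    rw [hh, tsum_coe_mul_geometric_of_norm_lt_one hnorm, hq]
  have e2 : ∑' k, g k ^ (1/(1-s)) = p / q := by
    rw [tsum_congr hgpow]
    have hh : ∑' k : ℕ, p^(k+1) = p * ∑' k : ℕ, p^k := by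
      rw [← tsum_mul_left]; exact tsum_congr fun k => pow_succ' p k
    rw [hh, tsum_geometric_of_lt_one hp0.le hp1, hq]
    field_simp
  rw [e1, e2] at hholder
  have hsummul' : Summable fun k : ℕ => ((k:ℝ)+1) ^ s * p^(k+1) :=
    hsummul.congr hfg
  have hsummain : Summable fun k : ℕ => (k:ℝ) ^ s * p^k := by
    apply (summable_nat_add_iff 1).mp
    apply hsummul'.congr
    intro n; push_cast; ring
  have lhs_eq : ∑' k : ℕ, (k:ℝ) ^ s * p ^ k = ∑' k, f k * g k := by
    rw [tsum_congr hfg, hsummain.tsum_eq_zero_add]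
    simp only [Nat.cast_zero, Real.zero_rpow hs0.ne', zero_mul, zero_add]
    exact (tsum_congr fun k => by push_cast; ring_nf).symm
  rw [lhs_eq]
  refine hholder.trans_eq ?_
  rw [one_div_one_div, one_div_one_div]
  rw [div_rpow hp0.le (by positivity), div_rpow hp0.le hq0.le, div_mul_div_comm,
    ← Real.rpow_add hp0, show s + (1-s) = 1 by ring, Real.rpow_one,
    ← Real.rpow_natCast q 2, ← Real.rpow_mul hq0.le, ← Real.rpow_add hq0,
    show ((2:ℕ):ℝ) * s + (1-s) = 1 + s by push_cast; ring,
    Real.rpow_neg hq0.le, div_eq_mul_inv]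


/-- For `p ∈ (0,1)`, `q = 1-p`, `s ∈ (0,1)`, the quantity
`(q/p)^s ⬝ (∑_{k≥1} k^s p^k q + ∑_{k≥1} k^{-s} q^k p)` is at most
`p^{1-s} + Γ(1-s) q^{1+s}`, which is at most `2·max(1, Γ(1-s))`. -/
theorem biased_ratio_moment_bound (p s : ℝ) (hp0 : 0 < p) (hp1 : p < 1)
    (hs0 : 0 < s) (hs1 : s < 1) :
    ((1 - p) / p) ^ s *
        ((∑' k : ℕ, (k : ℝ) ^ s * p ^ k * (1 - p)) +
          (∑' k : ℕ, ((k : ℝ) + 1) ^ (-s) * (1 - p) ^ (k + 1) * p)) ≤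
      p ^ (1 - s) + Real.Gamma (1 - s) * (1 - p) ^ (1 + s) ∧
    p ^ (1 - s) + Real.Gamma (1 - s) * (1 - p) ^ (1 + s) ≤
      2 * max 1 (Real.Gamma (1 - s)) := by
  have hq0 : (0:ℝ) < 1 - p := by linarith
  have hG : 0 < Real.Gamma (1-s) := Real.Gamma_pos_of_pos (by linarith)
  constructor
  · have hA : (∑' k : ℕ, (k:ℝ)^s * p^k * (1-p)) ≤ p * (1-p)^(-s) := by
      rw [tsum_mul_right]
      calc (∑' k : ℕ, (k:ℝ)^s * p^k) * (1-p)
          ≤ (p * (1-p)^(-(1+s))) * (1-p) :=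
            mul_le_mul_of_nonneg_right (sumA hp0 hp1 hs0 hs1) hq0.le
        _ = p * (1-p)^(-s) := by
            rw [mul_assoc]
            congr 1
            rw [show -s = -(1+s) + 1 by ring, Real.rpow_add hq0, Real.rpow_one]
    have hB : (∑' k : ℕ, ((k:ℝ)+1)^(-s) * (1-p)^(k+1) * p) ≤
        Real.Gamma (1-s) * (1-p) * p^s := by
      rw [tsum_mul_right]
      calc (∑' k : ℕ, ((k:ℝ)+1)^(-s) * (1-p)^(k+1)) * p
          ≤ (Real.Gamma (1-s) * (1-p) * p^(s-1)) * p :=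
            mul_le_mul_of_nonneg_right (sumB hp0 hp1 hs0 hs1) hp0.le
        _ = Real.Gamma (1-s) * (1-p) * p^s := by
            rw [mul_assoc]
            congr 1
            have h := Real.rpow_add hp0 (s-1) 1
            rw [Real.rpow_one] at h
            rw [← h]
            norm_num
    have hfac : (0:ℝ) ≤ ((1-p)/p)^s := Real.rpow_nonneg (by positivity) s
    refine le_trans (mul_le_mul_of_nonneg_left (add_le_add hA hB) hfac) (le_of_eq ?_)
    have e2 : p ^ (1-s) = p / p^s := by rw [Real.rpow_sub hp0, Real.rpow_one]
    have e3 : (1-p)^(1+s) = (1-p) * (1-p)^s := by rw [Real.rpow_add hq0, Real.rpow_one]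
    have e4 : (1-p)^(-s) = ((1-p)^s)⁻¹ := Real.rpow_neg hq0.le s
    rw [Real.div_rpow hq0.le hp0.le, e2, e3, e4]
    have hA0 : (0:ℝ) < (1-p)^s := Real.rpow_pos_of_pos hq0 s
    have hB0 : (0:ℝ) < p^s := Real.rpow_pos_of_pos hp0 s
    field_simp
  · have h1 : p^(1-s) ≤ 1 := Real.rpow_le_one hp0.le hp1.le (by linarith)
    have h2 : (1-p)^(1+s) ≤ 1 := Real.rpow_le_one hq0.le (by linarith) (by linarith)
    have h3 : Real.Gamma (1-s) * (1-p)^(1+s) ≤ Real.Gamma (1-s) := by nlinarith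
    have h4 := le_max_left (1:ℝ) (Real.Gamma (1-s))
    have h5 := le_max_right (1:ℝ) (Real.Gamma (1-s))
    linarith
end

section
/- For s ∈ (0, 1/2), a > 0, and K ≥ 1, consider independent Bernoulli random variables Y'_j with P[Y'_j = 1] = (1+a)/(2j+1+Ka) for j ≥ 0, and Y_j with P[Y_j = 1] = a/(j+1+2a) for j ≥ 0. Define the random variable Q̄ by: if Y'_0 = 0 then Q̄ = min{j ≥ 1 : Y'_j = 1}, and if Y'_0 = 1 then Q̄ = 1/min{j ≥ 1 : Y_j = 1}. Then E[Q̄^s] ≤ C(s,K) · a for a constant C(s,K) depending only on s and K. -/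
open Finset

noncomputable def drmRho (K : ℝ) : ℝ := (K + 2) / (K + 3)

lemma drmRho_pos {K : ℝ} (hK : 1 ≤ K) : 0 < drmRho K := by
  unfold drmRho; positivity

lemma drmRho_lt_one {K : ℝ} (hK : 1 ≤ K) : drmRho K < 1 := by
  unfold drmRho
  rw [div_lt_one (by linarith)]; linarith

noncomputable def drmM (K : ℝ) : ℝ := ∑' k : ℕ, (k : ℝ) * drmRho K ^ k

lemma drmM_summable {K : ℝ} (hK : 1 ≤ K) :
    Summable (fun k : ℕ => (k : ℝ) * drmRho K ^ k) := by
  have h := summable_pow_mul_geometric_of_norm_lt_one (R := ℝ) 1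
    (r := drmRho K) (by rw [Real.norm_eq_abs, abs_of_pos (drmRho_pos hK)]; exact drmRho_lt_one hK)
  simpa using h

lemma drmM_ge {K : ℝ} (hK : 1 ≤ K) (m : ℕ) : (m : ℝ) * drmRho K ^ m ≤ drmM K :=
  Summable.le_tsum (drmM_summable hK) m (fun k _ => mul_nonneg (Nat.cast_nonneg k) (pow_nonneg (drmRho_pos hK).le k))

lemma drmM_nonneg {K : ℝ} (hK : 1 ≤ K) : 0 ≤ drmM K := by
  simpa using drmM_ge hK 0

noncomputable def drmCA (K : ℝ) : ℝ :=
  max ((K - 1) * Real.sqrt ((K + 1) / 2)) (Real.sqrt (6 * K) * drmM K)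

lemma drmCA_nonneg {K : ℝ} (hK : 1 ≤ K) : 0 ≤ drmCA K :=
  le_trans (mul_nonneg (Real.sqrt_nonneg _) (drmM_nonneg hK)) (le_max_right _ _)

/-- telescoping product bound -/
lemma drm_prodq_le {c : ℝ} (hc : 0 ≤ c) (N : ℕ) (hN : 1 ≤ N) :
    ∏ j ∈ Finset.Ico 1 N, (2 * (j : ℝ) + c) / (2 * j + 1 + c)
      ≤ Real.sqrt ((2 + c) / (2 * N + c)) := by
  induction N, hN using Nat.le_induction with
  | base =>
    simp only [Nat.cast_one]
    rw [Finset.Ico_self, Finset.prod_empty]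
    rw [show (2:ℝ) * 1 + c = 2 + c by ring, div_self (by positivity), Real.sqrt_one]
  | succ N hN ih =>
    rw [Finset.prod_Ico_succ_top hN]
    have hxpos : (0:ℝ) < 2 * N + c := by
      have : (1:ℝ) ≤ N := by exact_mod_cast hN
      linarith
    have hfac : 0 ≤ (2 * (N:ℝ) + c) / (2 * N + 1 + c) := by positivity
    have h1 : (∏ j ∈ Finset.Ico 1 N, (2 * (j : ℝ) + c) / (2 * j + 1 + c)) *
        ((2 * (N:ℝ) + c) / (2 * N + 1 + c)) ≤
        Real.sqrt ((2 + c) / (2 * N + c)) * ((2 * (N:ℝ) + c) / (2 * N + 1 + c)) := by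
      apply mul_le_mul_of_nonneg_right ih hfac
    refine h1.trans ?_
    rw [← Real.sqrt_sq hfac, ← Real.sqrt_mul (by positivity)]
    apply Real.sqrt_le_sqrt
    rw [div_pow, div_mul_div_comm, div_le_div_iff₀ (by positivity) (by push_cast; positivity)]
    push_cast
    nlinarith [hc, hxpos, mul_nonneg (show (0:ℝ) ≤ 2 + c by linarith) hxpos.le]

section
variable {K a : ℝ}

/-- bound on the residual product, for `a ≥ 1` -/
lemma drm_prodr_le (hK : 1 ≤ K) (ha : 1 ≤ a) (N : ℕ) (hN : 1 ≤ N) :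
    ∏ j ∈ Finset.Ico 1 N, (2 * (j : ℝ) + 1 + (K - 1) * a) / (2 * j + 1 + (K - 1) * a + a)
      ≤ ((K + 2) / (K + 3)) ^ (min (N - 1) ⌊a⌋₊) := by
  have ha0 : (0:ℝ) < a := by linarith
  have hc : (0:ℝ) ≤ (K - 1) * a := by nlinarith
  set m := ⌊a⌋₊ with hm
  have hma : (m : ℝ) ≤ a := Nat.floor_le ha0.le
  set t := min N (m + 1) with ht
  have ht1 : 1 ≤ t := le_min hN (Nat.succ_le_succ (Nat.zero_le _))
  have htN : t ≤ N := min_le_left _ _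
  have hfacnn : ∀ j : ℕ, (0:ℝ) ≤ (2 * (j : ℝ) + 1 + (K - 1) * a) / (2 * j + 1 + (K - 1) * a + a) := by
    intro j
    have : (0:ℝ) ≤ (j:ℝ) := Nat.cast_nonneg j
    positivity
  have hfacle1 : ∀ j : ℕ, (2 * (j : ℝ) + 1 + (K - 1) * a) / (2 * j + 1 + (K - 1) * a + a) ≤ 1 := by
    intro j
    have : (0:ℝ) ≤ (j:ℝ) := Nat.cast_nonneg j
    rw [div_le_one (by linarith)]
    linarith
  have hsplit : Finset.Ico 1 N = Finset.Ico 1 t ∪ Finset.Ico t N :=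
    (Finset.Ico_union_Ico_eq_Ico ht1 htN).symm
  rw [hsplit, Finset.prod_union (Finset.Ico_disjoint_Ico_consecutive 1 t N)]
  have h2 : (∏ j ∈ Finset.Ico t N, (2 * (j : ℝ) + 1 + (K - 1) * a) / (2 * j + 1 + (K - 1) * a + a)) ≤ 1 :=
    Finset.prod_le_one (fun j _ => hfacnn j) (fun j _ => hfacle1 j)
  have h1 : (∏ j ∈ Finset.Ico 1 t, (2 * (j : ℝ) + 1 + (K - 1) * a) / (2 * j + 1 + (K - 1) * a + a))
      ≤ ((K + 2) / (K + 3)) ^ (min (N - 1) m) := by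
    have hcard : (Finset.Ico 1 t).card = min (N - 1) m := by
      rw [Nat.card_Ico]; omega
    rw [← hcard, ← Finset.prod_const]
    apply Finset.prod_le_prod (fun j _ => hfacnn j)
    intro j hj
    rw [Finset.mem_Ico] at hj
    have hjm : (j : ℝ) ≤ a := by
      have : j ≤ m := by omega
      exact le_trans (by exact_mod_cast this) hma
    rw [div_le_div_iff₀ (by nlinarith [Nat.cast_nonneg (α := ℝ) j]) (by linarith)]
    nlinarith [Nat.cast_nonneg (α := ℝ) j]
  calc _ ≤ ((K + 2) / (K + 3)) ^ (min (N - 1) m) * 1 := by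
        apply mul_le_mul h1 h2 (Finset.prod_nonneg (fun j _ => hfacnn j)) (by positivity)
    _ = _ := by rw [mul_one]
end

lemma drm_rpow_helper {N : ℕ} (hN : 1 ≤ N) (s : ℝ) :
    (N : ℝ) ^ s / (Real.sqrt N * N) = (N : ℝ) ^ (s - 3/2) := by
  have hN0 : (0:ℝ) < N := by exact_mod_cast hN
  have h32 : Real.sqrt N * (N:ℝ) = (N:ℝ) ^ ((3:ℝ)/2) := by
    rw [Real.sqrt_eq_rpow, show ((3:ℝ)/2) = 1/2 + 1 by ring, Real.rpow_add hN0, Real.rpow_one]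
  rw [h32, ← Real.rpow_sub hN0]

lemma drm_rpow_le_self {N : ℕ} (hN : 1 ≤ N) {s : ℝ} (hs : s ≤ 1) :
    (N : ℝ) ^ s ≤ (N : ℝ) := by
  have h1 : (1:ℝ) ≤ N := by exact_mod_cast hN
  calc (N:ℝ) ^ s ≤ (N:ℝ) ^ (1:ℝ) := Real.rpow_le_rpow_of_exponent_le h1 hs
    _ = N := Real.rpow_one _

set_option maxHeartbeats 1000000 in
lemma drm_key {s K a : ℝ} (hs0 : 0 < s) (hs1 : s < 1/2) (hK : 1 ≤ K) (ha : 0 < a)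
    (N : ℕ) (hN : 1 ≤ N) :
    (N : ℝ) ^ s * ((1 - (1 + a) / (1 + K * a)) *
        (∏ j ∈ Finset.Ico 1 N, (1 - (1 + a) / (2 * (j : ℝ) + 1 + K * a))) *
        ((1 + a) / (2 * (N : ℝ) + 1 + K * a)))
      ≤ a * (drmCA K * (N : ℝ) ^ (s - 3/2) + (N : ℝ) * drmRho K ^ (N - 1)) := by
  have haK : a ≤ K * a := by nlinarith
  have hKa : (0:ℝ) < K * a := by positivity
  have hc : (0:ℝ) ≤ (K - 1) * a := by nlinarith
  have hNR : (1:ℝ) ≤ (N:ℝ) := by exact_mod_cast hN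
  have hNpos : (0:ℝ) < (N:ℝ) := by linarith
  have hNs : (0:ℝ) ≤ (N:ℝ) ^ s := Real.rpow_nonneg hNpos.le s
  have hNs' : (0:ℝ) ≤ (N:ℝ) ^ (s - 3/2) := Real.rpow_nonneg hNpos.le _
  have hrho0 : (0:ℝ) < drmRho K := drmRho_pos hK
  have hrhomnn : ∀ k : ℕ, (0:ℝ) ≤ drmRho K ^ k := fun k => pow_nonneg hrho0.le k
  -- factorization
  have hfact : ∀ j : ℕ, 1 - (1 + a) / (2 * (j : ℝ) + 1 + K * a)
      = ((2 * (j:ℝ) + (K-1)*a) / (2 * (j:ℝ) + 1 + (K-1)*a)) *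
        ((2 * (j:ℝ) + 1 + (K-1)*a) / (2 * (j:ℝ) + 1 + (K-1)*a + a)) := by
    intro j
    have hj0 : (0:ℝ) ≤ (j:ℝ) := Nat.cast_nonneg j
    have hd1 : 2 * (j:ℝ) + 1 + K * a ≠ 0 := by nlinarith
    have hd2 : 2 * (j:ℝ) + 1 + (K-1)*a ≠ 0 := by nlinarith
    have hd3 : 2 * (j:ℝ) + 1 + (K-1)*a + a ≠ 0 := by nlinarith
    clear hNs hNs' hNR hNpos
    rw [div_mul_div_comm, one_sub_div hd1, div_eq_div_iff hd1 (mul_ne_zero hd2 hd3)]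
    ring
  have hprodsplit : (∏ j ∈ Finset.Ico 1 N, (1 - (1 + a) / (2 * (j : ℝ) + 1 + K * a)))
      = (∏ j ∈ Finset.Ico 1 N, (2 * (j:ℝ) + (K-1)*a) / (2 * (j:ℝ) + 1 + (K-1)*a)) *
        (∏ j ∈ Finset.Ico 1 N, (2 * (j:ℝ) + 1 + (K-1)*a) / (2 * (j:ℝ) + 1 + (K-1)*a + a)) := by
    rw [← Finset.prod_mul_distrib]
    exact Finset.prod_congr rfl (fun j _ => hfact j)
  set Pq := ∏ j ∈ Finset.Ico 1 N, (2 * (j:ℝ) + (K-1)*a) / (2 * (j:ℝ) + 1 + (K-1)*a) with hPq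
  set Pr := ∏ j ∈ Finset.Ico 1 N, (2 * (j:ℝ) + 1 + (K-1)*a) / (2 * (j:ℝ) + 1 + (K-1)*a + a) with hPr
  rw [hprodsplit]
  have hqnn : 0 ≤ Pq := Finset.prod_nonneg (fun j _ => by
    have : (0:ℝ) ≤ (j:ℝ) := Nat.cast_nonneg j
    positivity)
  have hqle1 : Pq ≤ 1 := Finset.prod_le_one (fun j _ => by
      have : (0:ℝ) ≤ (j:ℝ) := Nat.cast_nonneg j
      positivity)
    (fun j _ => by
      have : (0:ℝ) ≤ (j:ℝ) := Nat.cast_nonneg j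
      rw [div_le_one (by nlinarith)]; linarith)
  have hrnn : 0 ≤ Pr := Finset.prod_nonneg (fun j _ => by
    have : (0:ℝ) ≤ (j:ℝ) := Nat.cast_nonneg j
    positivity)
  have hrle1 : Pr ≤ 1 := Finset.prod_le_one (fun j _ => by
      have : (0:ℝ) ≤ (j:ℝ) := Nat.cast_nonneg j
      positivity)
    (fun j _ => by
      have : (0:ℝ) ≤ (j:ℝ) := Nat.cast_nonneg j
      rw [div_le_one (by nlinarith)]; linarith)
  have hq := drm_prodq_le hc N hN
  -- facts about the first factor
  have hp0nn : (0:ℝ) ≤ (1 + a) / (1 + K * a) := by positivity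
  have h0nn : 0 ≤ 1 - (1 + a) / (1 + K * a) := by
    rw [sub_nonneg, div_le_one (by linarith)]; linarith
  have h0le1 : 1 - (1 + a) / (1 + K * a) ≤ 1 := by linarith
  have h0leKa : 1 - (1 + a) / (1 + K * a) ≤ (K - 1) * a := by
    have heq : 1 - (1 + a) / (1 + K * a) = ((K-1)*a) / (1 + K * a) := by
      field_simp; ring
    rw [heq]
    exact div_le_self hc (by linarith)
  -- facts about the last factor
  have hpNnn : (0:ℝ) ≤ (1 + a) / (2 * (N:ℝ) + 1 + K * a) := by positivity
  have hpNle1 : (1 + a) / (2 * (N:ℝ) + 1 + K * a) ≤ 1 := by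
    rw [div_le_one (by linarith)]; linarith
  have hpNle : (1 + a) / (2 * (N:ℝ) + 1 + K * a) ≤ (1 + a) / (2 * (N:ℝ)) := by
    apply div_le_div_of_nonneg_left (by linarith) (by linarith) (by linarith)
  rcases le_or_gt a 1 with hA | hA
  · -- small a regime
    have hsq : Real.sqrt ((2 + (K-1)*a) / (2 * (N:ℝ) + (K-1)*a))
        ≤ Real.sqrt (K + 1) / Real.sqrt (2 * (N:ℝ)) := by
      rw [← Real.sqrt_div (by linarith)]
      apply Real.sqrt_le_sqrt
      apply div_le_div₀ (by linarith) (by nlinarith) (by linarith) (by linarith)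
    have hinner : (1 - (1 + a) / (1 + K * a)) * (Pq * Pr) * ((1 + a) / (2 * (N:ℝ) + 1 + K * a))
        ≤ ((K - 1) * a) * ((Real.sqrt (K + 1) / Real.sqrt (2 * (N:ℝ))) * 1) * ((1 + a) / (2 * (N:ℝ))) := by
      apply mul_le_mul _ hpNle hpNnn
      · apply mul_nonneg hc
        apply mul_nonneg (by positivity) (by norm_num)
      · apply mul_le_mul h0leKa _ (mul_nonneg hqnn hrnn) hc
        apply mul_le_mul (hq.trans hsq) hrle1 hrnn (by positivity)
    have hmain : (N : ℝ) ^ s * (((K - 1) * a) * ((Real.sqrt (K + 1) / Real.sqrt (2 * (N:ℝ))) * 1) * ((1 + a) / (2 * (N:ℝ))))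
        = (K - 1) * a * ((1 + a)/2) * Real.sqrt ((K + 1)/2) * ((N:ℝ) ^ (s - 3/2)) := by
      rw [← drm_rpow_helper hN s, Real.sqrt_div (by linarith : (0:ℝ) ≤ K + 1),
        Real.sqrt_mul (by norm_num : (0:ℝ) ≤ 2) (N:ℝ)]
      have h2 : Real.sqrt 2 ≠ 0 := by positivity
      have hsN : Real.sqrt (N:ℝ) ≠ 0 := by positivity
      field_simp
    calc (N : ℝ) ^ s * ((1 - (1 + a) / (1 + K * a)) * (Pq * Pr) * ((1 + a) / (2 * (N : ℝ) + 1 + K * a)))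
        ≤ (N : ℝ) ^ s * (((K - 1) * a) * ((Real.sqrt (K + 1) / Real.sqrt (2 * (N:ℝ))) * 1) * ((1 + a) / (2 * (N:ℝ)))) := by
          apply mul_le_mul_of_nonneg_left hinner hNs
      _ = (K - 1) * a * ((1 + a)/2) * Real.sqrt ((K + 1)/2) * ((N:ℝ) ^ (s - 3/2)) := hmain
      _ ≤ a * ((K - 1) * Real.sqrt ((K + 1)/2)) * ((N:ℝ) ^ (s - 3/2)) := by
          have h1a : (1 + a)/2 ≤ 1 := by linarith
          have hs1' : (0:ℝ) ≤ Real.sqrt ((K+1)/2) := Real.sqrt_nonneg _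
          apply mul_le_mul_of_nonneg_right _ hNs'
          nlinarith [mul_nonneg (mul_nonneg hc (by linarith : (0:ℝ) ≤ (1+a)/2)) hs1',
            mul_nonneg hc hs1']
      _ ≤ a * (drmCA K * (N:ℝ) ^ (s - 3/2)) := by
          rw [mul_assoc]
          apply mul_le_mul_of_nonneg_left _ ha.le
          apply mul_le_mul_of_nonneg_right (le_max_left _ _) hNs'
      _ ≤ a * (drmCA K * (N : ℝ) ^ (s - 3/2) + (N : ℝ) * drmRho K ^ (N - 1)) := by
          apply mul_le_mul_of_nonneg_left _ ha.le
          have : (0:ℝ) ≤ (N:ℝ) * drmRho K ^ (N - 1) := mul_nonneg hNpos.le (hrhomnn _)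
          linarith
  · -- large a regime
    have hr := drm_prodr_le hK hA.le N hN
    rw [← hPr] at hr
    set m := ⌊a⌋₊ with hm
    have hm1 : 1 ≤ m := Nat.le_floor (by exact_mod_cast hA.le)
    have hma : (m : ℝ) ≤ a := Nat.floor_le ha.le
    have ham : a < (m : ℝ) + 1 := Nat.lt_floor_add_one a
    have hmR : (1:ℝ) ≤ (m:ℝ) := by exact_mod_cast hm1
    rcases le_or_gt (N - 1) m with hNm | hNm
    · -- geometric regime
      rw [min_eq_left hNm] at hr
      have hinner : (1 - (1 + a) / (1 + K * a)) * (Pq * Pr) * ((1 + a) / (2 * (N:ℝ) + 1 + K * a))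
          ≤ 1 * (1 * drmRho K ^ (N-1)) * 1 := by
        apply mul_le_mul _ hpNle1 hpNnn
        · apply mul_nonneg (by norm_num)
          apply mul_nonneg (by norm_num) (hrhomnn _)
        · apply mul_le_mul h0le1 _ (mul_nonneg hqnn hrnn) (by norm_num)
          apply mul_le_mul hqle1 hr hrnn (by norm_num)
      calc (N : ℝ) ^ s * ((1 - (1 + a) / (1 + K * a)) * (Pq * Pr) * ((1 + a) / (2 * (N : ℝ) + 1 + K * a)))
          ≤ (N : ℝ) ^ s * (1 * (1 * drmRho K ^ (N-1)) * 1) := mul_le_mul_of_nonneg_left hinner hNs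
        _ = (N : ℝ) ^ s * drmRho K ^ (N-1) := by ring
        _ ≤ (N : ℝ) * drmRho K ^ (N-1) := by
            apply mul_le_mul_of_nonneg_right (drm_rpow_le_self hN (by linarith)) (hrhomnn _)
        _ ≤ a * ((N : ℝ) * drmRho K ^ (N-1)) := by
            nlinarith [mul_nonneg hNpos.le (hrhomnn (N-1))]
        _ ≤ a * (drmCA K * (N : ℝ) ^ (s - 3/2) + (N : ℝ) * drmRho K ^ (N - 1)) := by
            apply mul_le_mul_of_nonneg_left _ ha.le
            have : (0:ℝ) ≤ drmCA K * (N:ℝ) ^ (s - 3/2) := mul_nonneg (drmCA_nonneg hK) hNs'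
            linarith
    · -- power regime
      rw [min_eq_right (by omega)] at hr
      have hsq : Real.sqrt ((2 + (K-1)*a) / (2 * (N:ℝ) + (K-1)*a))
          ≤ Real.sqrt (3 * K * a) / Real.sqrt (2 * (N:ℝ)) := by
        rw [← Real.sqrt_div (by linarith)]
        apply Real.sqrt_le_sqrt
        apply div_le_div₀ (by nlinarith) (by nlinarith) (by linarith) (by linarith)
      have hinner : (1 - (1 + a) / (1 + K * a)) * (Pq * Pr) * ((1 + a) / (2 * (N:ℝ) + 1 + K * a))
          ≤ 1 * ((Real.sqrt (3 * K * a) / Real.sqrt (2 * (N:ℝ))) * drmRho K ^ m) * ((1 + a) / (2 * (N:ℝ))) := by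
        apply mul_le_mul _ hpNle hpNnn
        · apply mul_nonneg (by norm_num)
          apply mul_nonneg (by positivity) (hrhomnn _)
        · apply mul_le_mul h0le1 _ (mul_nonneg hqnn hrnn) (by norm_num)
          apply mul_le_mul (hq.trans hsq) hr hrnn (by positivity)
      have hmain : (N : ℝ) ^ s * (1 * ((Real.sqrt (3 * K * a) / Real.sqrt (2 * (N:ℝ))) * drmRho K ^ m) * ((1 + a) / (2 * (N:ℝ))))
          = ((1 + a)/2) * (Real.sqrt (3 * K / 2) * Real.sqrt a) * drmRho K ^ m * ((N:ℝ) ^ (s - 3/2)) := by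
        rw [← drm_rpow_helper hN s,
          show (3:ℝ) * K * a = (3 * K / 2 * a) * 2 by ring,
          Real.sqrt_mul (by positivity : (0:ℝ) ≤ 3 * K / 2 * a) 2,
          Real.sqrt_mul (by positivity : (0:ℝ) ≤ 3 * K / 2) a,
          Real.sqrt_mul (by norm_num : (0:ℝ) ≤ 2) (N:ℝ)]
        have h2 : Real.sqrt 2 ≠ 0 := by positivity
        have hsN : Real.sqrt (N:ℝ) ≠ 0 := by positivity
        field_simp
      have hsqa : Real.sqrt a * drmRho K ^ m ≤ 2 * drmM K := by
        have hx : Real.sqrt a * Real.sqrt a = a := Real.mul_self_sqrt ha.le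
        have hxn : (0:ℝ) ≤ Real.sqrt a := Real.sqrt_nonneg a
        have hsa : Real.sqrt a ≤ a := by nlinarith [sq_nonneg (Real.sqrt a - 1)]
        have h2m : a ≤ 2 * (m:ℝ) := by linarith
        calc Real.sqrt a * drmRho K ^ m ≤ (2 * (m:ℝ)) * drmRho K ^ m := by
              apply mul_le_mul_of_nonneg_right (by linarith) (hrhomnn m)
          _ = 2 * ((m:ℝ) * drmRho K ^ m) := by ring
          _ ≤ 2 * drmM K := by
              have := drmM_ge hK m
              linarith
      have hfinal : ((1 + a)/2) * (Real.sqrt (3 * K / 2) * Real.sqrt a) * drmRho K ^ m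
          ≤ a * (Real.sqrt (6 * K) * drmM K) := by
        have h6K : Real.sqrt (6 * K) = 2 * Real.sqrt (3 * K / 2) := by
          rw [show (6:ℝ) * K = 4 * (3 * K / 2) by ring,
            Real.sqrt_mul (by norm_num : (0:ℝ) ≤ 4),
            show Real.sqrt 4 = 2 by
              rw [show (4:ℝ) = 2 ^ 2 by norm_num, Real.sqrt_sq (by norm_num : (0:ℝ) ≤ 2)]]
        rw [h6K]
        have hs32 : (0:ℝ) ≤ Real.sqrt (3 * K / 2) := Real.sqrt_nonneg _
        have h1a : (1 + a)/2 ≤ a := by linarith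
        calc ((1 + a)/2) * (Real.sqrt (3 * K / 2) * Real.sqrt a) * drmRho K ^ m
            = ((1 + a)/2) * Real.sqrt (3 * K / 2) * (Real.sqrt a * drmRho K ^ m) := by ring
          _ ≤ ((1 + a)/2) * Real.sqrt (3 * K / 2) * (2 * drmM K) := by
              apply mul_le_mul_of_nonneg_left hsqa
              apply mul_nonneg (by linarith) hs32
          _ ≤ a * Real.sqrt (3 * K / 2) * (2 * drmM K) := by
              apply mul_le_mul_of_nonneg_right _ (by nlinarith [drmM_nonneg hK])
              apply mul_le_mul_of_nonneg_right h1a hs32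
          _ = a * (2 * Real.sqrt (3 * K / 2) * drmM K) := by ring
      calc (N : ℝ) ^ s * ((1 - (1 + a) / (1 + K * a)) * (Pq * Pr) * ((1 + a) / (2 * (N : ℝ) + 1 + K * a)))
          ≤ (N : ℝ) ^ s * (1 * ((Real.sqrt (3 * K * a) / Real.sqrt (2 * (N:ℝ))) * drmRho K ^ m) * ((1 + a) / (2 * (N:ℝ)))) :=
            mul_le_mul_of_nonneg_left hinner hNs
        _ = ((1 + a)/2) * (Real.sqrt (3 * K / 2) * Real.sqrt a) * drmRho K ^ m * ((N:ℝ) ^ (s - 3/2)) := hmain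
        _ ≤ (a * (Real.sqrt (6 * K) * drmM K)) * ((N:ℝ) ^ (s - 3/2)) :=
            mul_le_mul_of_nonneg_right hfinal hNs'
        _ ≤ a * (drmCA K * (N : ℝ) ^ (s - 3/2)) := by
            rw [mul_assoc]
            apply mul_le_mul_of_nonneg_left _ ha.le
            apply mul_le_mul_of_nonneg_right (le_max_right _ _) hNs'
        _ ≤ a * (drmCA K * (N : ℝ) ^ (s - 3/2) + (N : ℝ) * drmRho K ^ (N - 1)) := by
            apply mul_le_mul_of_nonneg_left _ ha.le
            have : (0:ℝ) ≤ (N:ℝ) * drmRho K ^ (N - 1) := mul_nonneg hNpos.le (hrhomnn _)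
            linarith

open MeasureTheory ProbabilityTheory

set_option maxHeartbeats 1000000 in
/-- For `s ∈ (0, 1/2)` and `K ≥ 1` there is a constant `C(s,K)` such
that for every `a > 0` and every family of independent Bernoulli random variables
`Y'_j` with `P[Y'_j = 1] = (1+a)/(2j+1+Ka)` and `Y_j` with `P[Y_j = 1] = a/(j+1+2a)`
(`j ≥ 0`, all jointly independent), the random variable `Q̄` defined by
`Q̄ = min{j ≥ 1 : Y'_j = 1}` if `Y'_0 = 0` and `Q̄ = 1/min{j ≥ 1 : Y_j = 1}` if
`Y'_0 = 1` satisfies `E[Q̄^s] ≤ C(s,K) · a`. -/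
theorem dominating_ratio_moment_bound (s K : ℝ) (hs0 : 0 < s) (hs1 : s < 1 / 2)
    (hK : 1 ≤ K) :
    ∃ C > 0, ∀ a : ℝ, 0 < a →
      ∀ (Ω : Type) (_ : MeasurableSpace Ω) (μ : Measure Ω),
        IsProbabilityMeasure μ →
        ∀ Y Y' : ℕ → Ω → Bool,
          (∀ j, Measurable (Y j)) → (∀ j, Measurable (Y' j)) →
          iIndepFun (Sum.elim Y Y') μ →
          (∀ j : ℕ, μ (Y j ⁻¹' {true}) = ENNReal.ofReal (a / (j + 1 + 2 * a))) →
          (∀ j : ℕ, μ (Y' j ⁻¹' {true}) =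
            ENNReal.ofReal ((1 + a) / (2 * j + 1 + K * a))) →
          (∫ ω, (if Y' 0 ω then
              (1 : ℝ) / (sInf {j : ℕ | 1 ≤ j ∧ Y j ω = true} : ℕ)
            else
              ((sInf {j : ℕ | 1 ≤ j ∧ Y' j ω = true} : ℕ) : ℝ)) ^ s ∂μ) ≤ C * a := by
  have hrho0 := drmRho_pos hK
  have hrho1 := drmRho_lt_one hK
  -- the dominating summable sequence
  set h : ℕ → ℝ := fun n => ((n:ℝ)+1) ^ (-(1+s)) +
      (drmCA K * ((n:ℝ)+1) ^ (s - 3/2) + ((n:ℝ)+1) * drmRho K ^ n) with hh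
  have hshift : ∀ p : ℝ, p < -1 → Summable (fun n : ℕ => ((n:ℝ)+1) ^ p) := by
    intro p hp
    have h1 : Summable (fun n : ℕ => ((n:ℝ)) ^ p) := Real.summable_nat_rpow.mpr hp
    have h2 := (_root_.summable_nat_add_iff (f := fun n : ℕ => ((n:ℝ)) ^ p) 1).mpr h1
    apply h2.congr
    intro n
    push_cast
    ring_nf
  have hsumh : Summable h := by
    apply Summable.add (hshift _ (by linarith))
    apply Summable.add ((hshift _ (by linarith)).mul_left _)
    have h1 : Summable (fun k : ℕ => (k:ℝ) * drmRho K ^ k) := drmM_summable hK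
    have h2 : Summable (fun k : ℕ => drmRho K ^ k) :=
      summable_geometric_of_lt_one hrho0.le hrho1
    apply (h1.add h2).congr
    intro n
    ring
  have hhnn : ∀ n, 0 ≤ h n := by
    intro n
    have h1 : (0:ℝ) ≤ ((n:ℝ)+1) ^ (-(1+s)) := Real.rpow_nonneg (by positivity) _
    have h2 : (0:ℝ) ≤ drmCA K * ((n:ℝ)+1) ^ (s-3/2) :=
      mul_nonneg (drmCA_nonneg hK) (Real.rpow_nonneg (by positivity) _)
    have h3 : (0:ℝ) ≤ ((n:ℝ)+1) * drmRho K ^ n :=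
      mul_nonneg (by positivity) (pow_nonneg hrho0.le n)
    simp only [hh]
    linarith
  have hHnn : 0 ≤ ∑' n, h n := tsum_nonneg hhnn
  refine ⟨(∑' n, h n) + 1, by linarith, ?_⟩
  intro a ha Ω mΩ μ hμ Y Y' hY hY' hindep hYval hY'val
  have haK : a ≤ K * a := by nlinarith
  have hCa : (0:ℝ) ≤ ((∑' n, h n) + 1) * a := by positivity
  -- nonnegativity of the integrand
  have hFnn : ∀ ω : Ω, 0 ≤ (if Y' 0 ω then
      (1 : ℝ) / (sInf {j : ℕ | 1 ≤ j ∧ Y j ω = true} : ℕ)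
    else
      ((sInf {j : ℕ | 1 ≤ j ∧ Y' j ω = true} : ℕ) : ℝ)) ^ s := by
    intro ω
    apply Real.rpow_nonneg
    split_ifs
    · positivity
    · positivity
  by_cases hint : Integrable (fun ω => (if Y' 0 ω then
      (1 : ℝ) / (sInf {j : ℕ | 1 ≤ j ∧ Y j ω = true} : ℕ)
    else
      ((sInf {j : ℕ | 1 ≤ j ∧ Y' j ω = true} : ℕ) : ℝ)) ^ s) μ
  swap
  · rw [integral_undef hint]
    exact hCa
  rw [integral_eq_lintegral_of_nonneg_ae (Filter.Eventually.of_forall hFnn)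
    hint.aestronglyMeasurable]
  apply ENNReal.toReal_le_of_le_ofReal hCa
  -- events
  set Bset : ℕ → Set Ω := fun n =>
    ⋂ j ∈ Finset.range (n+1), Y' j ⁻¹' (if j = n then ({true} : Set Bool) else {false})
    with hBset
  have hBmeas : ∀ n, MeasurableSet (Bset n) := by
    intro n
    apply Finset.measurableSet_biInter
    intro j _
    apply hY' j
    split_ifs <;> exact measurableSet_singleton _
  have hAmeas : ∀ n, MeasurableSet (Y n ⁻¹' {true}) :=
    fun n => hY n (measurableSet_singleton true)
  have hA'meas : ∀ n, MeasurableSet (Y' n ⁻¹' {true}) :=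
    fun n => hY' n (measurableSet_singleton true)
  -- the dominating functions
  set g : ℕ → Ω → ENNReal := fun n =>
    (Y (n+1) ⁻¹' {true}).indicator (fun _ => ENNReal.ofReal (((n:ℝ)+1) ^ (-s))) +
    (Bset (n+1)).indicator (fun _ => ENNReal.ofReal (((n:ℝ)+1) ^ s)) with hg
  have hgmeas : ∀ n, Measurable (g n) := fun n =>
    (measurable_const.indicator (hAmeas (n+1))).add
      (measurable_const.indicator (hBmeas (n+1)))
  -- pointwise bound
  have hpt : ∀ ω : Ω, ENNReal.ofReal ((if Y' 0 ω then
      (1 : ℝ) / (sInf {j : ℕ | 1 ≤ j ∧ Y j ω = true} : ℕ)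
    else
      ((sInf {j : ℕ | 1 ≤ j ∧ Y' j ω = true} : ℕ) : ℝ)) ^ s) ≤ ∑' n, g n ω := by
    intro ω
    by_cases hb : Y' 0 ω = true
    · rw [if_pos hb]
      rcases Set.eq_empty_or_nonempty {j : ℕ | 1 ≤ j ∧ Y j ω = true} with hS | hS
      · have h0 : sInf {j : ℕ | 1 ≤ j ∧ Y j ω = true} = 0 := by
          rw [hS]; exact Nat.sInf_empty
        rw [h0]
        simp [Real.zero_rpow hs0.ne']
      · obtain ⟨h1T, hYT⟩ := Nat.sInf_mem hS
        set T := sInf {j : ℕ | 1 ≤ j ∧ Y j ω = true} with hT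
        have hT1 : T - 1 + 1 = T := Nat.succ_pred_eq_of_pos h1T
        have hTc : ((T - 1 : ℕ) : ℝ) + 1 = (T : ℝ) := by
          rw [Nat.cast_sub h1T]; push_cast; ring
        refine le_trans ?_ (ENNReal.le_tsum (T - 1))
        have hmem : ω ∈ Y (T - 1 + 1) ⁻¹' {true} := by
          rw [hT1]; exact hYT
        have hval : (1 / (T : ℝ)) ^ s = (T : ℝ) ^ (-s) := by
          rw [one_div, Real.inv_rpow (Nat.cast_nonneg T), ← Real.rpow_neg (Nat.cast_nonneg T)]
        rw [hval, ← hTc]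
        have hgv : g (T-1) ω = ENNReal.ofReal ((((T-1:ℕ):ℝ)+1) ^ (-s)) +
            (Bset (T-1+1)).indicator (fun _ => ENNReal.ofReal ((((T-1:ℕ):ℝ)+1) ^ s)) ω := by
          simp only [hg, Pi.add_apply, Set.indicator_of_mem hmem]
        rw [hgv]
        exact le_self_add
    · rw [if_neg hb]
      have hb' : Y' 0 ω = false := by
        cases hYb : Y' 0 ω
        · rfl
        · exact absurd hYb hb
      rcases Set.eq_empty_or_nonempty {j : ℕ | 1 ≤ j ∧ Y' j ω = true} with hS | hS
      · have h0 : sInf {j : ℕ | 1 ≤ j ∧ Y' j ω = true} = 0 := by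
          rw [hS]; exact Nat.sInf_empty
        rw [h0]
        simp [Real.zero_rpow hs0.ne']
      · obtain ⟨h1T, hYT⟩ := Nat.sInf_mem hS
        set T := sInf {j : ℕ | 1 ≤ j ∧ Y' j ω = true} with hT
        have hT1 : T - 1 + 1 = T := Nat.succ_pred_eq_of_pos h1T
        have hTc : ((T - 1 : ℕ) : ℝ) + 1 = (T : ℝ) := by
          rw [Nat.cast_sub h1T]; push_cast; ring
        refine le_trans ?_ (ENNReal.le_tsum (T - 1))
        have hmem : ω ∈ Bset (T - 1 + 1) := by
          rw [hT1]
          simp only [hBset, Set.mem_iInter]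
          intro j hj
          rw [Finset.mem_range] at hj
          by_cases hjT : j = T
          · rw [if_pos hjT]
            simp only [Set.mem_preimage, Set.mem_singleton_iff]
            rw [hjT]; exact hYT
          · rw [if_neg hjT]
            simp only [Set.mem_preimage, Set.mem_singleton_iff]
            have hjlt : j < T := by omega
            rcases Nat.eq_zero_or_pos j with hj0 | hj1
            · rw [hj0]; exact hb'
            · have hnot := Nat.notMem_of_lt_sInf (s := {j : ℕ | 1 ≤ j ∧ Y' j ω = true})
                (by rw [← hT]; exact hjlt)
              simp only [Set.mem_setOf_eq, not_and] at hnot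
              have hne := hnot hj1
              cases hYb : Y' j ω
              · rfl
              · exact absurd hYb hne
        rw [← hTc]
        have hgv : g (T-1) ω = (Y (T-1+1) ⁻¹' {true}).indicator
            (fun _ => ENNReal.ofReal ((((T-1:ℕ):ℝ)+1) ^ (-s))) ω +
            ENNReal.ofReal ((((T-1:ℕ):ℝ)+1) ^ s) := by
          simp only [hg, Pi.add_apply, Set.indicator_of_mem hmem]
        rw [hgv]
        exact le_add_self
  -- basic facts about p'
  have hp'nonneg : ∀ j : ℕ, (0:ℝ) ≤ (1+a)/(2*(j:ℝ)+1+K*a) := by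
    intro j
    have : (0:ℝ) ≤ (j:ℝ) := Nat.cast_nonneg j
    positivity
  have hp'le1 : ∀ j : ℕ, (1+a)/(2*(j:ℝ)+1+K*a) ≤ 1 := by
    intro j
    have : (0:ℝ) ≤ (j:ℝ) := Nat.cast_nonneg j
    rw [div_le_one (by linarith)]
    linarith
  have hμfalse : ∀ j : ℕ, μ (Y' j ⁻¹' ({false} : Set Bool)) =
      ENNReal.ofReal (1 - (1+a)/(2*(j:ℝ)+1+K*a)) := by
    intro j
    have hcompl : (Y' j) ⁻¹' ({false} : Set Bool) = ((Y' j) ⁻¹' {true})ᶜ := by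
      ext ω'
      simp [Bool.not_eq_true]
    rw [hcompl, prob_compl_eq_one_sub (hA'meas j), hY'val j,
      ← ENNReal.ofReal_one, ← ENNReal.ofReal_sub _ (by push_cast; exact hp'nonneg j)]
  -- the value of μ (Bset (n+1))
  have hBval : ∀ n : ℕ, μ (Bset (n+1)) = ENNReal.ofReal
      ((1 - (1+a)/(1+K*a)) *
        (∏ j ∈ Finset.Ico 1 (n+1), (1 - (1+a)/(2*(j:ℝ)+1+K*a))) *
        ((1+a)/(2*((n:ℝ)+1)+1+K*a))) := by
    intro n
    have hSm : ∀ i : ℕ ⊕ ℕ, i ∈ (Finset.range (n+2)).map ⟨Sum.inr, Sum.inr_injective⟩ →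
        MeasurableSet[inferInstance] ((Sum.elim (fun _ => (Set.univ : Set Bool))
          (fun j => if j = n+1 then ({true} : Set Bool) else {false})) i) := by
      intro i _
      rcases i with i | i
      · exact MeasurableSet.univ
      · simp only [Sum.elim_inr]
        split_ifs <;> exact measurableSet_singleton _
    have hprod := hindep.measure_inter_preimage_eq_mul
      (S := (Finset.range (n+2)).map ⟨Sum.inr, Sum.inr_injective⟩) hSm
    have hL : (⋂ i ∈ (Finset.range (n+2)).map ⟨Sum.inr, Sum.inr_injective⟩,
        (Sum.elim Y Y') i ⁻¹' ((Sum.elim (fun _ => (Set.univ : Set Bool))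
          (fun j => if j = n+1 then ({true} : Set Bool) else {false})) i)) = Bset (n+1) := by
      simp only [hBset]
      ext ω'
      simp only [Set.mem_iInter, Finset.mem_map, Function.Embedding.coeFn_mk]
      constructor
      · intro hI j hj
        exact hI (Sum.inr j) ⟨j, hj, rfl⟩
      · rintro hI i ⟨j, hj, rfl⟩
        exact hI j hj
    have hR : (∏ i ∈ (Finset.range (n+2)).map ⟨Sum.inr, Sum.inr_injective⟩,
        μ ((Sum.elim Y Y') i ⁻¹' ((Sum.elim (fun _ => (Set.univ : Set Bool))
          (fun j => if j = n+1 then ({true} : Set Bool) else {false})) i)))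
        = ∏ j ∈ Finset.range (n+2),
            μ (Y' j ⁻¹' (if j = n+1 then ({true}:Set Bool) else {false})) := by
      rw [Finset.prod_map]
      rfl
    rw [hL, hR] at hprod
    rw [hprod]
    have hfac : ∀ j ∈ Finset.range (n+2),
        μ (Y' j ⁻¹' (if j = n+1 then ({true}:Set Bool) else {false})) =
        ENNReal.ofReal (if j = n+1 then (1+a)/(2*(j:ℝ)+1+K*a)
          else 1 - (1+a)/(2*(j:ℝ)+1+K*a)) := by
      intro j _
      by_cases hj : j = n+1
      · rw [if_pos hj, if_pos hj, hY'val j]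
      · rw [if_neg hj, if_neg hj]
        exact hμfalse j
    rw [Finset.prod_congr rfl hfac, ← ENNReal.ofReal_prod_of_nonneg]
    · congr 1
      rw [Finset.prod_range_succ, if_pos rfl]
      have hcongr : ∀ j ∈ Finset.range (n+1),
          (if j = n+1 then (1+a)/(2*(j:ℝ)+1+K*a) else 1 - (1+a)/(2*(j:ℝ)+1+K*a))
          = 1 - (1+a)/(2*(j:ℝ)+1+K*a) := by
        intro j hj
        rw [Finset.mem_range] at hj
        rw [if_neg (by omega)]
      rw [Finset.prod_congr rfl hcongr, Finset.range_eq_Ico,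
        Finset.prod_eq_prod_Ico_succ_bot (by omega : 0 < n+1)]
      push_cast
      ring_nf
    · intro j _
      split_ifs
      · exact hp'nonneg j
      · have := hp'le1 j
        linarith
  -- main computation
  calc ∫⁻ ω, ENNReal.ofReal ((if Y' 0 ω then
          (1 : ℝ) / (sInf {j : ℕ | 1 ≤ j ∧ Y j ω = true} : ℕ)
        else
          ((sInf {j : ℕ | 1 ≤ j ∧ Y' j ω = true} : ℕ) : ℝ)) ^ s) ∂μ
      ≤ ∫⁻ ω, ∑' n, g n ω ∂μ := lintegral_mono hpt
    _ = ∑' n, ∫⁻ ω, g n ω ∂μ := lintegral_tsum (fun n => (hgmeas n).aemeasurable)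
    _ ≤ ∑' n, ENNReal.ofReal (a * h n) := by
        apply ENNReal.tsum_le_tsum
        intro n
        have hgint : ∫⁻ ω, g n ω ∂μ =
            ENNReal.ofReal (((n:ℝ)+1) ^ (-s)) * μ (Y (n+1) ⁻¹' {true}) +
            ENNReal.ofReal (((n:ℝ)+1) ^ s) * μ (Bset (n+1)) := by
          simp only [hg, Pi.add_apply]
          rw [lintegral_add_left (measurable_const.indicator (hAmeas (n+1)))]
          rw [lintegral_indicator_const (hAmeas (n+1)),
            lintegral_indicator_const (hBmeas (n+1))]
        rw [hgint]
        have hA : ENNReal.ofReal (((n:ℝ)+1) ^ (-s)) * μ (Y (n+1) ⁻¹' {true}) ≤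
            ENNReal.ofReal (a * (((n:ℝ)+1) ^ (-(1+s)))) := by
          rw [hYval (n+1), ← ENNReal.ofReal_mul (Real.rpow_nonneg (by positivity) _)]
          apply ENNReal.ofReal_le_ofReal
          push_cast
          have hd : a / ((n:ℝ) + 1 + 1 + 2*a) ≤ a / ((n:ℝ)+1) :=
            div_le_div_of_nonneg_left ha.le (by positivity) (by linarith)
          have he : ((n:ℝ)+1) ^ (-(1+s)) = ((n:ℝ)+1) ^ (-s) * ((n:ℝ)+1)⁻¹ := by
            rw [show -(1+s) = -s + (-1) by ring, Real.rpow_add (by positivity),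
              Real.rpow_neg_one]
          calc ((n:ℝ)+1) ^ (-s) * (a / ((n:ℝ)+1+1+2*a))
              ≤ ((n:ℝ)+1) ^ (-s) * (a / ((n:ℝ)+1)) :=
                mul_le_mul_of_nonneg_left hd (Real.rpow_nonneg (by positivity) _)
            _ = a * (((n:ℝ)+1) ^ (-(1+s))) := by
                rw [he, div_eq_mul_inv]; ring
        have hB : ENNReal.ofReal (((n:ℝ)+1) ^ s) * μ (Bset (n+1)) ≤
            ENNReal.ofReal (a * (drmCA K * ((n:ℝ)+1) ^ (s-3/2) +
              ((n:ℝ)+1) * drmRho K ^ n)) := by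
          rw [hBval n, ← ENNReal.ofReal_mul (Real.rpow_nonneg (by positivity) _)]
          apply ENNReal.ofReal_le_ofReal
          have hkey := drm_key hs0 hs1 hK ha (n+1) (by omega)
          have hc1 : ((n+1:ℕ):ℝ) = (n:ℝ)+1 := by push_cast; ring
          rw [hc1, Nat.add_sub_cancel] at hkey
          exact hkey
        calc ENNReal.ofReal (((n:ℝ)+1) ^ (-s)) * μ (Y (n+1) ⁻¹' {true}) +
              ENNReal.ofReal (((n:ℝ)+1) ^ s) * μ (Bset (n+1))
            ≤ ENNReal.ofReal (a * (((n:ℝ)+1) ^ (-(1+s)))) +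
              ENNReal.ofReal (a * (drmCA K * ((n:ℝ)+1) ^ (s-3/2) +
                ((n:ℝ)+1) * drmRho K ^ n)) := add_le_add hA hB
          _ = ENNReal.ofReal (a * h n) := by
              rw [← ENNReal.ofReal_add (by positivity)]
              · congr 1
                simp only [hh]
                ring
              · apply mul_nonneg ha.le
                have h2 : (0:ℝ) ≤ drmCA K * ((n:ℝ)+1) ^ (s-3/2) :=
                  mul_nonneg (drmCA_nonneg hK) (Real.rpow_nonneg (by positivity) _)
                have h3 : (0:ℝ) ≤ ((n:ℝ)+1) * drmRho K ^ n :=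
                  mul_nonneg (by positivity) (pow_nonneg hrho0.le n)
                linarith
    _ = ENNReal.ofReal (∑' n, a * h n) :=
        (ENNReal.ofReal_tsum_of_nonneg (fun n => mul_nonneg ha.le (hhnn n))
          (hsumh.mul_left a)).symm
    _ ≤ ENNReal.ofReal (((∑' n, h n) + 1) * a) := by
        apply ENNReal.ofReal_le_ofReal
        rw [tsum_mul_left]
        nlinarith
end

section
/- Consider two walkers on the path {-1, 0, 1}, both starting at 0, where at each time step one of the two walkers is chosen uniformly at random (independently) to move. Let τ_0 = 0 and τ_{n+1} = inf{k > τ_n : both walkers are at 0 at time k}. Then for every n ≥ 0 and l ≥ 1, P[τ_{n+1} - τ_n = 2l] = 2^{-l}, and E[τ_{n+1} - τ_n] = 4. -/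
open MeasureTheory ProbabilityTheory Finset

/-- On the path `{-1,0,1}` with both walkers starting at `0`, each chosen walker
alternates between `0` and an outer node, so at time `k` both walkers are at `0` iff
each walker has been chosen an even number of times. `S i = true` means walker 1 is
chosen to move at step `i`. This predicate says both walkers are at `0` at time `k`. -/
def bothAtCenter {Ω : Type*} (S : ℕ → Ω → Bool) (k : ℕ) (ω : Ω) : Prop :=
  Even ((Finset.range k).filter (fun i => S i ω = true)).card ∧
  Even ((Finset.range k).filter (fun i => S i ω = false)).card

/-- The successive times `τ_0 = 0 < τ_1 < τ_2 < ⋯` at which both walkers are at the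
center node `0`. -/
noncomputable def meetingTime {Ω : Type*} (S : ℕ → Ω → Bool) : ℕ → Ω → ℕ
  | 0 => fun _ => 0
  | n + 1 => fun ω => sInf {k | meetingTime S n ω < k ∧ bothAtCenter S k ω}

namespace TwoWalkerAux
open scoped NNReal ENNReal
variable {Ω : Type*}
section Comb
variable (S : ℕ → Ω → Bool)

/-- window count of `true`s on `[a, a+2j)` -/
def w (a j : ℕ) (ω : Ω) : ℕ := ((Finset.Ico a (a+2*j)).filter (fun i => S i ω = true)).card

/-- count of indices `i < j` where the pair `(a+2i, a+2i+1)` differs -/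
def dct (a j : ℕ) (ω : Ω) : ℕ :=
  ((Finset.range j).filter (fun i => (S (a+2*i) ω == S (a+2*i+1) ω) = false)).card

/-- the target bit pattern: pairs equal except first and last when `l ≥ 2` -/
def W (l i : ℕ) : Bool := (l == 1) || !((i == 0) || (i == l - 1))

lemma pair_even (x : ℕ) (ω : Ω) :
    Even (((Finset.Ico x (x+2)).filter (fun i => S i ω = true)).card) ↔ S x ω = S (x+1) ω := by
  have h : Finset.Ico x (x+2) = {x, x+1} := by
    ext i; simp only [Finset.mem_Ico, Finset.mem_insert, Finset.mem_singleton]; omega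
  rw [h]
  have hne : x ≠ x + 1 := by omega
  cases hx : S x ω <;> cases hy : S (x+1) ω <;>
    simp [Finset.filter_insert, Finset.filter_singleton, hx, hy, hne, Nat.even_iff]

lemma w_succ (a j : ℕ) (ω : Ω) :
    w S a (j+1) ω = w S a j ω
      + ((Finset.Ico (a+2*j) (a+2*j+2)).filter (fun i => S i ω = true)).card := by
  unfold w
  rw [show a+2*(j+1) = (a+2*j)+2 by ring,
    ← Finset.Ico_union_Ico_eq_Ico (by omega : a ≤ a+2*j) (by omega : a+2*j ≤ a+2*j+2),
    Finset.filter_union, Finset.card_union_of_disjoint]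
  exact Finset.disjoint_filter_filter (Finset.Ico_disjoint_Ico_consecutive _ _ _)

lemma dct_succ (a j : ℕ) (ω : Ω) :
    dct S a (j+1) ω = dct S a j ω
      + (if (S (a+2*j) ω == S (a+2*j+1) ω) = false then 1 else 0) := by
  unfold dct
  rw [Finset.range_add_one, Finset.filter_insert]
  split_ifs with h
  · rw [Finset.card_insert_of_notMem (by simp)]
  · simp

lemma w_parity (a : ℕ) (ω : Ω) : ∀ j, (Even (w S a j ω) ↔ Even (dct S a j ω)) := by
  intro j
  induction j with
  | zero => simp [w, dct]
  | succ j ih =>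
    rw [w_succ, dct_succ, Nat.even_add, Nat.even_add, ih, pair_even]
    cases hsame : (S (a+2*j) ω == S (a+2*j+1) ω)
    · have hne : ¬ (S (a+2*j) ω = S (a+2*j+1) ω) := by simpa using hsame
      simp [hsame, hne, Nat.even_iff]
    · have heq : S (a+2*j) ω = S (a+2*j+1) ω := by simpa using hsame
      simp [hsame, heq]

lemma W_eq (l i : ℕ) :
    W l i = if l = 1 then true else if i = 0 ∨ i = l - 1 then false else true := by
  by_cases h1 : l = 1 <;> by_cases h2 : i = 0 <;> by_cases h3 : i = l-1 <;>
    simp [W, h1, h2, h3]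

lemma dct_zero (a : ℕ) (ω : Ω) : dct S a 0 ω = 0 := by simp [dct]

lemma pat_iff (a l : ℕ) (hl : 1 ≤ l) (ω : Ω) :
    ((∀ j, 1 ≤ j → j < l → ¬ Even (w S a j ω)) ∧ Even (w S a l ω))
    ↔ ∀ i, i < l → (S (a+2*i) ω == S (a+2*i+1) ω) = W l i := by
  simp only [w_parity]
  constructor
  · rintro ⟨hmid, hl2⟩ i hi
    rw [W_eq]
    by_cases hl1 : l = 1
    · subst hl1
      have hi0 : i = 0 := by omega
      subst hi0
      rw [dct_succ, dct_zero] at hl2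
      simp only [if_pos rfl]
      cases hb0 : (S (a+2*0) ω == S (a+2*0+1) ω)
      · rw [hb0] at hl2; simp at hl2
      · rfl
    · rw [if_neg hl1]
      by_cases hi0 : i = 0
      · subst hi0
        have h1 := hmid 1 le_rfl (by omega)
        rw [dct_succ, dct_zero] at h1
        rw [if_pos (Or.inl rfl)]
        cases hb0 : (S (a+2*0) ω == S (a+2*0+1) ω)
        · rfl
        · rw [hb0] at h1; simp at h1
      · by_cases hil : i = l - 1
        · subst hil
          have hprev := hmid (l-1) (by omega) (by omega)
          have hll : l = (l-1)+1 := by omega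
          rw [hll, dct_succ] at hl2
          rw [if_pos (Or.inr rfl)]
          cases hbi : (S (a+2*(l-1)) ω == S (a+2*(l-1)+1) ω)
          · rfl
          · rw [hbi] at hl2
            rw [if_neg (by simp : ¬ ((true : Bool) = false))] at hl2
            rw [Nat.add_zero] at hl2
            exact absurd hl2 hprev
        · have h1 := hmid i (by omega) (by omega)
          have h2 := hmid (i+1) (by omega) (by omega)
          rw [dct_succ] at h2
          rw [if_neg (by tauto)]
          cases hbi : (S (a+2*i) ω == S (a+2*i+1) ω)
          · rw [hbi, if_pos rfl] at h2
            rw [Nat.even_iff] at h1 h2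
            omega
          · rfl
  · intro hb
    have claim : ∀ j, j ≤ l →
        dct S a j ω = if l = 1 then 0 else if j = 0 then 0 else if j < l then 1 else 2 := by
      intro j
      induction j with
      | zero => intro _; rw [dct_zero]; split_ifs <;> omega
      | succ j ihj =>
        intro hjl
        rw [dct_succ, ihj (by omega), hb j (by omega), W_eq]
        split_ifs <;> simp_all <;> omega
    constructor
    · intro j hj1 hjl
      rw [claim j (by omega)]
      split_ifs
      all_goals first | decide | (exfalso; omega)
    · rw [claim l le_rfl]
      split_ifs
      all_goals first | decide | (exfalso; omega)

/-- number of `true`s among steps `i < k` -/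
def nt (k : ℕ) (ω : Ω) : ℕ := ((Finset.range k).filter (fun i => S i ω = true)).card

lemma both_iff (k : ℕ) (ω : Ω) : bothAtCenter S k ω ↔ Even k ∧ Even (nt S k ω) := by
  have hsplit : ((range k).filter (fun i => S i ω = true)).card
      + ((range k).filter (fun i => ¬ (S i ω = true))).card = k := by
    rw [Finset.card_filter_add_card_filter_not, Finset.card_range]
  have hneg : ((range k).filter (fun i => ¬ (S i ω = true))).card
      = ((range k).filter (fun i => S i ω = false)).card := by
    congr 1
    apply Finset.filter_congr
    intro i _
    simp
  rw [hneg] at hsplit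
  unfold bothAtCenter nt
  simp only [Nat.even_iff]
  omega

lemma both_zero (ω : Ω) : bothAtCenter S 0 ω := by
  constructor <;> simp

lemma both_even {k : ℕ} {ω : Ω} (h : bothAtCenter S k ω) : Even k :=
  ((both_iff S k ω).1 h).1

lemma nt_add (a b : ℕ) (hab : a ≤ b) (ω : Ω) :
    nt S b ω = nt S a ω + ((Finset.Ico a b).filter (fun i => S i ω = true)).card := by
  unfold nt
  rw [Finset.range_eq_Ico, ← Finset.Ico_union_Ico_eq_Ico (Nat.zero_le a) hab,
    Finset.filter_union, Finset.card_union_of_disjoint]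
  · rw [Finset.range_eq_Ico]
  exact Finset.disjoint_filter_filter (Finset.Ico_disjoint_Ico_consecutive 0 a b)


lemma both_congr {k : ℕ} {ω ω' : Ω} (h : ∀ i, i < k → S i ω = S i ω') :
    bothAtCenter S k ω ↔ bothAtCenter S k ω' := by
  unfold bothAtCenter
  have h1 : (range k).filter (fun i => S i ω = true)
      = (range k).filter (fun i => S i ω' = true) := by
    apply Finset.filter_congr; intro i hi; rw [h i (Finset.mem_range.1 hi)]
  have h2 : (range k).filter (fun i => S i ω = false)
      = (range k).filter (fun i => S i ω' = false) := by
    apply Finset.filter_congr; intro i hi; rw [h i (Finset.mem_range.1 hi)]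
  rw [h1, h2]

lemma both_add_iff {a j : ℕ} {ω : Ω} (ha : bothAtCenter S a ω) :
    bothAtCenter S (a+2*j) ω ↔ Even (w S a j ω) := by
  obtain ⟨hea, hna⟩ := (both_iff S a ω).1 ha
  rw [both_iff]
  have hnt : nt S (a+2*j) ω = nt S a ω + w S a j ω := nt_add S a (a+2*j) (by omega) ω
  rw [hnt]
  constructor
  · rintro ⟨_, hh⟩
    exact (Nat.even_add.1 hh).1 hna
  · intro hw
    exact ⟨hea.add (even_two_mul j), Nat.even_add.2 (iff_of_true hna hw)⟩

lemma step_iff {a l : ℕ} {ω : Ω} (ha : bothAtCenter S a ω) :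
    (bothAtCenter S (a+2*l) ω ∧ ∀ k, a < k → k < a+2*l → ¬ bothAtCenter S k ω)
    ↔ ((∀ j, 1 ≤ j → j < l → ¬ Even (w S a j ω)) ∧ Even (w S a l ω)) := by
  have hae : Even a := both_even S ha
  constructor
  · rintro ⟨h2l, hmid⟩
    refine ⟨?_, (both_add_iff S ha).1 h2l⟩
    intro j hj1 hjl hev
    exact hmid (a+2*j) (by omega) (by omega) ((both_add_iff S ha).2 hev)
  · rintro ⟨hmid, hev⟩
    refine ⟨(both_add_iff S ha).2 hev, ?_⟩
    intro k hk1 hk2 hb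
    have hke : Even k := both_even S hb
    obtain ⟨j, hj⟩ : ∃ j, k = a + 2*j := by
      rcases hae with ⟨x, hx⟩; rcases hke with ⟨y, hy⟩; exact ⟨y - x, by omega⟩
    subst hj
    exact hmid j (by omega) (by omega) ((both_add_iff S ha).1 hb)

lemma sInf_eq_iff {a l : ℕ} (hl : 1 ≤ l) {ω : Ω} :
    sInf {k | a < k ∧ bothAtCenter S k ω} = a + 2*l
    ↔ (bothAtCenter S (a+2*l) ω ∧ ∀ k, a < k → k < a+2*l → ¬ bothAtCenter S k ω) := by
  constructor
  · intro h
    have hne : {k | a < k ∧ bothAtCenter S k ω}.Nonempty := by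
      by_contra hemp
      rw [Set.not_nonempty_iff_eq_empty] at hemp
      rw [hemp, Nat.sInf_empty] at h; omega
    have hmem := Nat.sInf_mem hne
    rw [h] at hmem
    refine ⟨hmem.2, ?_⟩
    intro k hk1 hk2 hb
    have := Nat.sInf_le (show k ∈ {k | a < k ∧ bothAtCenter S k ω} from ⟨hk1, hb⟩)
    omega
  · rintro ⟨hb, hmid⟩
    have hmem : a + 2*l ∈ {k | a < k ∧ bothAtCenter S k ω} := ⟨by omega, hb⟩
    apply le_antisymm
    · exact Nat.sInf_le hmem
    · by_contra hlt
      push_neg at hlt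
      have hmem2 := Nat.sInf_mem (⟨_, hmem⟩ : Set.Nonempty _)
      exact hmid _ hmem2.1 hlt hmem2.2

lemma both_meeting (n : ℕ) (ω : Ω) : bothAtCenter S (meetingTime S n ω) ω := by
  cases n with
  | zero => exact both_zero S ω
  | succ n =>
    show bothAtCenter S (sInf {k | meetingTime S n ω < k ∧ bothAtCenter S k ω}) ω
    rcases Set.eq_empty_or_nonempty {k | meetingTime S n ω < k ∧ bothAtCenter S k ω} with he | hne
    · rw [he, Nat.sInf_empty]; exact both_zero S ω
    · exact (Nat.sInf_mem hne).2

/-- the good event: infinitely many meeting times -/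
def Good : Set Ω := {ω | ∀ m : ℕ, ∃ k, m < k ∧ bothAtCenter S k ω}

/-- finitely-determined versions of the events `{τ_n = a}` -/
def AEv : ℕ → ℕ → Set Ω
  | 0, a => if a = 0 then Set.univ else ∅
  | n+1, a => if a = 0 then ∅ else
      ⋃ a' ∈ Finset.range a, (AEv n a' ∩
        {ω | bothAtCenter S a ω ∧ ∀ k, a' < k → k < a → ¬ bothAtCenter S k ω})

lemma AEv_unique : ∀ n a c (ω : Ω), ω ∈ AEv S n a → ω ∈ AEv S n c → a = c := by
  intro n
  induction n with
  | zero =>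
    intro a c ω ha hc
    by_cases h1 : a = 0 <;> by_cases h2 : c = 0 <;> simp [AEv, h1, h2] at ha hc ⊢ <;> omega
  | succ n ih =>
    intro a c ω ha hc
    by_cases h1 : a = 0
    · simp [AEv, h1] at ha
    by_cases h2 : c = 0
    · simp [AEv, h2] at hc
    simp only [AEv, if_neg h1, Set.mem_iUnion, Set.mem_inter_iff, Set.mem_setOf_eq] at ha
    simp only [AEv, if_neg h2, Set.mem_iUnion, Set.mem_inter_iff, Set.mem_setOf_eq] at hc
    obtain ⟨a1, ha1r, hA1, hb1, hm1⟩ := ha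
    obtain ⟨a2, ha2r, hA2, hb2, hm2⟩ := hc
    have he12 : a1 = a2 := ih a1 a2 ω hA1 hA2
    subst he12
    rcases lt_trichotomy a c with h | h | h
    · exact absurd hb1 (hm2 a (Finset.mem_range.1 ha1r) h)
    · exact h
    · exact absurd hb2 (hm1 c (Finset.mem_range.1 ha2r) h)

lemma AEv_det_mp : ∀ n a (ω ω' : Ω), (∀ i, i < a → S i ω = S i ω') →
    ω ∈ AEv S n a → ω' ∈ AEv S n a := by
  intro n
  induction n with
  | zero =>
    intro a ω ω' _ ha
    by_cases h1 : a = 0 <;> simp [AEv, h1] at ha ⊢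
  | succ n ih =>
    intro a ω ω' h ha
    by_cases h1 : a = 0
    · simp [AEv, h1] at ha
    simp only [AEv, if_neg h1, Set.mem_iUnion, Set.mem_inter_iff, Set.mem_setOf_eq] at ha ⊢
    obtain ⟨a', ha'r, hA, hb, hm⟩ := ha
    have haa : a' < a := Finset.mem_range.1 ha'r
    refine ⟨a', ha'r, ih a' ω ω' (fun i hi => h i (by omega)) hA,
      (both_congr S (fun i hi => h i hi)).1 hb, ?_⟩
    intro k hk1 hk2 hbk
    exact hm k hk1 hk2 ((both_congr S (fun i hi => h i (by omega))).2 hbk)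

lemma AEv_correct (n : ℕ) {ω : Ω} (hg : ω ∈ Good S) (a : ℕ) :
    ω ∈ AEv S n a ↔ meetingTime S n ω = a := by
  induction n generalizing a with
  | zero =>
    by_cases h0 : a = 0
    · subst h0; simp [AEv, meetingTime]
    · exact iff_of_false (by simp [AEv, h0]) (by simp [meetingTime]; omega)
  | succ n ih =>
    have hne : {k | meetingTime S n ω < k ∧ bothAtCenter S k ω}.Nonempty := hg (meetingTime S n ω)
    have hmem := Nat.sInf_mem hne
    have hτ1 : meetingTime S (n+1) ω = sInf {k | meetingTime S n ω < k ∧ bothAtCenter S k ω} := rfl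
    by_cases h0 : a = 0
    · subst h0
      refine iff_of_false (by simp [AEv]) ?_
      rw [hτ1]
      have := hmem.1
      omega
    · constructor
      · intro hmemA
        simp only [AEv, if_neg h0, Set.mem_iUnion, Set.mem_inter_iff, Set.mem_setOf_eq] at hmemA
        obtain ⟨a', ha'r, hA, hb, hm⟩ := hmemA
        have hτa : meetingTime S n ω = a' := (ih a').1 hA
        rw [hτ1, hτa]
        apply le_antisymm
        · exact Nat.sInf_le ⟨Finset.mem_range.1 ha'r, hb⟩
        · by_contra hlt
          push_neg at hlt
          have hm2 := Nat.sInf_mem (⟨a, ⟨Finset.mem_range.1 ha'r, hb⟩⟩ :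
            Set.Nonempty {k | a' < k ∧ bothAtCenter S k ω})
          exact hm _ hm2.1 hlt hm2.2
      · intro hEq
        have ha' : meetingTime S n ω < a := by
          rw [hτ1] at hEq
          have := hmem.1
          omega
        simp only [AEv, if_neg h0, Set.mem_iUnion, Set.mem_inter_iff, Set.mem_setOf_eq]
        refine ⟨meetingTime S n ω, Finset.mem_range.2 ha', (ih _).2 rfl, ?_, ?_⟩
        · rw [hτ1] at hEq; exact hEq ▸ hmem.2
        · intro k hk1 hk2 hbk
          have := Nat.sInf_le (show k ∈ {k | meetingTime S n ω < k ∧ bothAtCenter S k ω}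
            from ⟨hk1, hbk⟩)
          rw [hτ1] at hEq
          omega

end Comb

section Prob
variable [MeasurableSpace Ω] (μ : Measure Ω) [IsProbabilityMeasure μ]
  (S : ℕ → Ω → Bool) (hmeas : ∀ i, Measurable (S i))
  (hindep : iIndepFun S μ)
  (hfair : ∀ i, μ (S i ⁻¹' {true}) = 1 / 2)

include hmeas hindep hfair

lemma fair' (i : ℕ) (b : Bool) : μ (S i ⁻¹' {b}) = 1 / 2 := by
  cases b
  · have hc : S i ⁻¹' {false} = (S i ⁻¹' {true})ᶜ := by
      ext ω; simp
    rw [hc, measure_compl (hmeas i (measurableSet_singleton _)) (measure_ne_top μ _),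
      measure_univ, hfair i, one_div, ENNReal.one_sub_inv_two]
  · exact hfair i

lemma cyl (c m : ℕ) (b : ℕ → Bool) :
    μ {ω | ∀ j, j < m → S (c+j) ω = b j} = (1/2 : ENNReal) ^ m := by
  have hset : {ω | ∀ j, j < m → S (c+j) ω = b j}
      = ⋂ i ∈ (Finset.range m).image (fun j => c + j), S i ⁻¹' {b (i - c)} := by
    ext ω
    simp only [Set.mem_setOf_eq, Set.mem_iInter, Finset.mem_image, Finset.mem_range,
      Set.mem_preimage, Set.mem_singleton_iff]
    constructor
    · rintro h i ⟨j, hj, rfl⟩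
      rw [Nat.add_sub_cancel_left]
      exact h j hj
    · intro h j hj
      have := h (c+j) ⟨j, hj, rfl⟩
      rwa [Nat.add_sub_cancel_left] at this
  rw [hset,
    hindep.measure_inter_preimage_eq_mul _ (fun i _ => measurableSet_singleton _),
    Finset.prod_congr rfl (fun i _ => fair' μ S hmeas hindep hfair i (b (i - c))),
    Finset.prod_const,
    Finset.card_image_of_injective _ (add_right_injective c),
    Finset.card_range]

lemma pat_meas (c l : ℕ) (V : ℕ → Bool) :
    μ {ω | ∀ i, i < l → ((S (c+2*i) ω == S (c+2*i+1) ω) = V i)} = (1/2 : ENNReal) ^ l := by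
  classical
  set bb : (Fin l → Bool) → ℕ → Bool := fun g j =>
    if h : j / 2 < l then (if j % 2 = 0 then g ⟨j/2, h⟩ else (g ⟨j/2, h⟩ == V (j/2))) else true
    with hbb
  have bbe : ∀ (g : Fin l → Bool) (i : ℕ) (h : i < l), bb g (2*i) = g ⟨i, h⟩ := by
    intro g i h
    have h2 : (2*i) / 2 = i := by omega
    have h3 : (2*i) % 2 = 0 := by omega
    simp [hbb, h2, h3, h]
  have bbo : ∀ (g : Fin l → Bool) (i : ℕ) (h : i < l), bb g (2*i+1) = (g ⟨i, h⟩ == V i) := by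
    intro g i h
    have h2 : (2*i+1) / 2 = i := by omega
    have h3 : (2*i+1) % 2 = 1 := by omega
    simp [hbb, h2, h3, h]
  have hb1 : ∀ a b v : Bool, ((a == b) = v) → b = (a == v) := by decide
  have hb2 : ∀ a v : Bool, (a == (a == v)) = v := by decide
  have hset : {ω | ∀ i, i < l → ((S (c+2*i) ω == S (c+2*i+1) ω) = V i)}
      = ⋃ g : Fin l → Bool, {ω | ∀ j, j < 2*l → S (c+j) ω = bb g j} := by
    ext ω
    simp only [Set.mem_setOf_eq, Set.mem_iUnion]
    constructor
    · intro h
      refine ⟨fun i => S (c+2*(i : ℕ)) ω, ?_⟩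
      intro j hj
      rcases Nat.even_or_odd j with ⟨t, ht⟩ | ⟨t, ht⟩
      · obtain ⟨i, rfl⟩ : ∃ i, j = 2*i := ⟨t, by omega⟩
        have hi : i < l := by omega
        exact (bbe (fun i : Fin l => S (c + 2 * (i:ℕ)) ω) i hi).symm
      · obtain ⟨i, rfl⟩ : ∃ i, j = 2*i+1 := ⟨t, by omega⟩
        have hi : i < l := by omega
        exact (hb1 _ _ _ (h i hi)).trans
          (bbo (fun i : Fin l => S (c + 2 * (i:ℕ)) ω) i hi).symm
    · rintro ⟨g, hg⟩ i hi
      have e1 := hg (2*i) (by omega)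
      have e2 := hg (2*i+1) (by omega)
      rw [← Nat.add_assoc] at e2
      rw [bbe _ _ hi] at e1
      rw [bbo _ _ hi] at e2
      rw [e1, e2]
      exact hb2 _ _
  have hmeasg : ∀ g : Fin l → Bool, MeasurableSet {ω | ∀ j, j < 2*l → S (c+j) ω = bb g j} := by
    intro g
    have : {ω | ∀ j, j < 2*l → S (c+j) ω = bb g j}
        = ⋂ j ∈ Finset.range (2*l), S (c+j) ⁻¹' {bb g j} := by
      ext ω
      simp [Set.mem_iInter]
    rw [this]
    exact MeasurableSet.biInter (Finset.range (2*l)).countable_toSet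
      (fun j _ => hmeas _ (measurableSet_singleton _))
  have hdisj : Pairwise (Function.onFun Disjoint
      (fun g : Fin l → Bool => {ω | ∀ j, j < 2*l → S (c+j) ω = bb g j})) := by
    intro g g' hne
    rw [Function.onFun, Set.disjoint_left]
    intro ω h1 h2
    apply hne
    funext i
    have e1 := h1 (2*(i:ℕ)) (by omega)
    have e2 := h2 (2*(i:ℕ)) (by omega)
    rw [bbe _ _ i.isLt] at e1 e2
    rw [← e1, ← e2]
  rw [hset, measure_iUnion hdisj hmeasg]
  have hval : ∀ g : Fin l → Bool,
      μ {ω | ∀ j, j < 2*l → S (c+j) ω = bb g j} = (1/2 : ENNReal) ^ (2*l) :=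
    fun g => cyl μ S hmeas hindep hfair c (2*l) (bb g)
  rw [tsum_congr hval, tsum_fintype]
  simp only [Finset.sum_const, Finset.card_univ, Fintype.card_fun, Fintype.card_fin,
    Fintype.card_bool, nsmul_eq_mul, Nat.cast_pow, Nat.cast_ofNat]
  rw [two_mul, pow_add, ← mul_assoc, one_div, ← mul_pow,
    ENNReal.mul_inv_cancel (by norm_num) (by norm_num), one_pow, one_mul]

end Prob

section Det
variable (S : ℕ → Ω → Bool)

/-- `A` is determined by the coordinates in `I` -/
def Det (I : Finset ℕ) (A : Set Ω) : Prop :=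
  ∀ ω ω', (∀ i ∈ I, S i ω = S i ω') → ω ∈ A → ω' ∈ A

variable [MeasurableSpace Ω]

/-- restriction map to finitely many coordinates -/
def res (I : Finset ℕ) : Ω → ((i : I) → Bool) := fun ω i => S i ω

lemma res_measurable (hmeas : ∀ i, Measurable (S i)) (I : Finset ℕ) :
    Measurable (res S I) :=
  measurable_pi_lambda _ (fun i => hmeas i)

lemma det_preimage {I : Finset ℕ} {A : Set Ω} (hA : Det S I A) :
    A = (res S I) ⁻¹' (res S I '' A) := by
  apply Set.Subset.antisymm (Set.subset_preimage_image _ _)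
  rintro ω ⟨ω', hω'A, heq⟩
  exact hA ω' ω (fun i hi => congrFun heq ⟨i, hi⟩) hω'A

lemma det_measurable (hmeas : ∀ i, Measurable (S i)) {I : Finset ℕ} {A : Set Ω}
    (hA : Det S I A) : MeasurableSet A := by
  rw [det_preimage S hA]
  exact res_measurable S hmeas I (Set.toFinite _).measurableSet

lemma det_indep (μ : Measure Ω) (hmeas : ∀ i, Measurable (S i))
    (hindep : iIndepFun S μ)
    {I J : Finset ℕ} (hIJ : Disjoint I J) {A B : Set Ω}
    (hA : Det S I A) (hB : Det S J B) :
    μ (A ∩ B) = μ A * μ B := by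
  have h := (hindep.indepFun_finset I J hIJ hmeas).measure_inter_preimage_eq_mul
    (s := res S I '' A) (t := res S J '' B)
    (Set.toFinite _).measurableSet (Set.toFinite _).measurableSet
  rw [det_preimage S hA, det_preimage S hB]
  exact h

end Det

section Events
variable [MeasurableSpace Ω] (μ : Measure Ω) [IsProbabilityMeasure μ]
  (S : ℕ → Ω → Bool) (hmeas : ∀ i, Measurable (S i))
  (hindep : iIndepFun S μ)
  (hfair : ∀ i, μ (S i ⁻¹' {true}) = 1 / 2)

/-- the pattern event for a first return after `2l` steps, starting at time `a` -/
def PatE (a l : ℕ) : Set Ω :=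
  {ω | ∀ i, i < l → ((S (a+2*i) ω == S (a+2*i+1) ω) = W l i)}

lemma det_PatE (a l : ℕ) : Det S (Finset.Ico a (a+2*l)) (PatE S a l) := by
  intro ω ω' h hω i hi
  have h1 := h (a+2*i) (Finset.mem_Ico.2 (by omega))
  have h2 := h (a+2*i+1) (Finset.mem_Ico.2 (by omega))
  rw [← h1, ← h2]
  exact hω i hi

lemma det_AEv (n a : ℕ) : Det S (Finset.range a) (AEv S n a) :=
  fun ω ω' h => AEv_det_mp S n a ω ω' (fun i hi => h i (Finset.mem_range.2 hi))

include hmeas hindep hfair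

lemma PatE_meas (a l : ℕ) : μ (PatE S a l) = (1/2 : ENNReal) ^ l :=
  pat_meas μ S hmeas hindep hfair a l (W l)

lemma bad_null (m : ℕ) : μ {ω | ∀ k, m < k → ¬ bothAtCenter S k ω} = 0 := by
  set c := 2*(m+1) with hc
  have hsub : ∀ L : ℕ, {ω | ∀ k, m < k → ¬ bothAtCenter S k ω}
      ⊆ {ω | ∀ i, i < L → ((S (c+2*i) ω == S (c+2*i+1) ω) = (fun _ => true) i)} := by
    intro L ω hω i _
    have h1 := hω (c+2*i) (by omega)
    have h2 := hω (c+2*i+2) (by omega)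
    rw [both_iff] at h1 h2
    have ho1 : ¬ Even (nt S (c+2*i) ω) := fun h => h1 ⟨⟨m+1+i, by omega⟩, h⟩
    have ho2 : ¬ Even (nt S (c+2*i+2) ω) := fun h => h2 ⟨⟨m+1+i+1, by omega⟩, h⟩
    have hadd := nt_add S (c+2*i) (c+2*i+2) (by omega) ω
    have hpair := pair_even S (c+2*i) ω
    rw [beq_iff_eq]
    apply hpair.1
    rw [hadd] at ho2
    by_contra hodd
    rcases Nat.even_or_odd ((Finset.Ico (c+2*i) (c+2*i+2)).filter (fun q => S q ω = true)).card
      with he | hodd'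
    · exact hodd he
    · rw [Nat.even_iff] at ho1 ho2
      rw [Nat.odd_iff] at hodd'
      omega
  by_contra h0
  obtain ⟨L, hL⟩ := ENNReal.exists_inv_two_pow_lt h0
  have hle := (measure_mono (hsub L)).trans_eq
    (pat_meas μ S hmeas hindep hfair c L (fun _ => true))
  rw [one_div] at hle
  exact absurd hle (not_le.2 hL)

lemma good_null : μ (Good S)ᶜ = 0 := by
  have : (Good S)ᶜ = ⋃ m : ℕ, {ω | ∀ k, m < k → ¬ bothAtCenter S k ω} := by
    ext ω
    simp only [Set.mem_compl_iff, Good, Set.mem_setOf_eq, Set.mem_iUnion]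
    push_neg
    rfl
  rw [this]
  exact measure_iUnion_null (fun m => bad_null μ S hmeas hindep hfair m)

lemma inter_good (X : Set Ω) : μ (X ∩ Good S) = μ X := by
  apply le_antisymm (measure_mono Set.inter_subset_left)
  calc μ X ≤ μ ((X ∩ Good S) ∪ (Good S)ᶜ) := measure_mono (fun ω hx => by
        by_cases hg : ω ∈ Good S
        · exact Or.inl ⟨hx, hg⟩
        · exact Or.inr hg)
    _ ≤ μ (X ∩ Good S) + μ (Good S)ᶜ := measure_union_le _ _
    _ = μ (X ∩ Good S) := by rw [good_null μ S hmeas hindep hfair, add_zero]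

omit hmeas hindep hfair

/-- the measurable model of the event `{τ_{n+1} = τ_n + 2l}` -/
def BSet (n l : ℕ) : Set Ω := ⋃ a : ℕ, (AEv S n a ∩ PatE S a l)

lemma main_eq (n l : ℕ) (hl : 1 ≤ l) :
    {ω | meetingTime S (n+1) ω = meetingTime S n ω + 2*l} ∩ Good S
      = BSet S n l ∩ Good S := by
  ext ω
  simp only [Set.mem_inter_iff, Set.mem_setOf_eq, BSet, Set.mem_iUnion]
  constructor
  · rintro ⟨hτ, hg⟩
    refine ⟨⟨meetingTime S n ω, (AEv_correct S n hg _).2 rfl, ?_⟩, hg⟩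
    have hboth := both_meeting S n ω
    have h1 : sInf {k | meetingTime S n ω < k ∧ bothAtCenter S k ω}
        = meetingTime S n ω + 2*l := hτ
    exact (pat_iff S _ l hl ω).1 ((step_iff S hboth).1 ((sInf_eq_iff S hl).1 h1))
  · rintro ⟨⟨a, hA, hP⟩, hg⟩
    have hτa : meetingTime S n ω = a := (AEv_correct S n hg a).1 hA
    have hboth : bothAtCenter S a ω := hτa ▸ both_meeting S n ω
    have h1 := (sInf_eq_iff S hl).2 ((step_iff S hboth).2 ((pat_iff S a l hl ω).2 hP))
    refine ⟨?_, hg⟩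
    show sInf {k | meetingTime S n ω < k ∧ bothAtCenter S k ω} = meetingTime S n ω + 2*l
    rw [hτa]
    exact h1

include hmeas hindep hfair

lemma union_AEv_one (n : ℕ) : μ (⋃ a : ℕ, AEv S n a) = 1 := by
  apply le_antisymm prob_le_one
  have hGood : Good S ⊆ ⋃ a : ℕ, AEv S n a := by
    intro ω hg
    exact Set.mem_iUnion.2 ⟨meetingTime S n ω, (AEv_correct S n hg _).2 rfl⟩
  calc (1 : ENNReal) = μ (Set.univ ∩ Good S) := by
        rw [inter_good μ S hmeas hindep hfair, measure_univ]
    _ ≤ μ (⋃ a : ℕ, AEv S n a) :=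
        measure_mono (fun ω hω => hGood hω.2)

lemma BSet_meas_eq (n l : ℕ) : μ (BSet S n l) = (1/2 : ENNReal) ^ l := by
  have hdisj : Pairwise (Function.onFun Disjoint (fun a => AEv S n a ∩ PatE S a l)) := by
    intro a c hac
    rw [Function.onFun, Set.disjoint_left]
    rintro ω ⟨hA1, _⟩ ⟨hA2, _⟩
    exact hac (AEv_unique S n a c ω hA1 hA2)
  have hms : ∀ a : ℕ, MeasurableSet (AEv S n a ∩ PatE S a l) := fun a =>
    (det_measurable S hmeas (det_AEv S n a)).inter
      (det_measurable S hmeas (det_PatE S a l))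
  rw [BSet, measure_iUnion hdisj hms]
  have hterm : ∀ a : ℕ, μ (AEv S n a ∩ PatE S a l) = μ (AEv S n a) * (1/2 : ENNReal)^l := by
    intro a
    rw [det_indep S μ hmeas hindep (I := Finset.range a) (J := Finset.Ico a (a+2*l))
      (by rw [Finset.disjoint_left]; intro x hx hx'; rw [Finset.mem_range] at hx;
          rw [Finset.mem_Ico] at hx'; omega)
      (det_AEv S n a) (det_PatE S a l),
      PatE_meas μ S hmeas hindep hfair a l]
  rw [tsum_congr hterm, ENNReal.tsum_mul_right]
  have hdisjA : Pairwise (Function.onFun Disjoint (fun a => AEv S n a)) := by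
    intro a c hac
    rw [Function.onFun, Set.disjoint_left]
    intro ω hA1 hA2
    exact hac (AEv_unique S n a c ω hA1 hA2)
  rw [← measure_iUnion hdisjA (fun a => det_measurable S hmeas (det_AEv S n a)),
    union_AEv_one μ S hmeas hindep hfair n, one_mul]

lemma part1 (n l : ℕ) (hl : 1 ≤ l) :
    μ {ω | meetingTime S (n+1) ω = meetingTime S n ω + 2*l} = (1/2 : ENNReal) ^ l := by
  rw [← inter_good μ S hmeas hindep hfair
      {ω | meetingTime S (n+1) ω = meetingTime S n ω + 2*l},
    main_eq S n l hl,
    inter_good μ S hmeas hindep hfair (BSet S n l),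
    BSet_meas_eq μ S hmeas hindep hfair n l]

end Events

section Part2
variable [MeasurableSpace Ω] (μ : Measure Ω) [IsProbabilityMeasure μ]
  (S : ℕ → Ω → Bool) (hmeas : ∀ i, Measurable (S i))
  (hindep : iIndepFun S μ)
  (hfair : ∀ i, μ (S i ⁻¹' {true}) = 1 / 2)

lemma W_conflict {l l' : ℕ} (h1 : 1 ≤ l) (h2 : l < l') :
    ∃ i, i < l ∧ W l i ≠ W l' i := by
  by_cases hl1 : l = 1
  · subst hl1
    refine ⟨0, by omega, ?_⟩
    rw [W_eq, W_eq, if_pos rfl, if_neg (by omega : ¬ l' = 1), if_pos (Or.inl rfl)]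
    simp
  · refine ⟨l-1, by omega, ?_⟩
    rw [W_eq, W_eq, if_neg hl1, if_pos (Or.inr rfl), if_neg (by omega : ¬ l' = 1),
      if_neg (by omega : ¬ (l-1 = 0 ∨ l-1 = l'-1))]
    simp

lemma BSet_disj_aux (n : ℕ) {l l' : ℕ} (h1 : 1 ≤ l) (h2 : l < l') :
    Disjoint (BSet S n l) (BSet S n l') := by
  rw [Set.disjoint_left]
  intro ω hω hω'
  obtain ⟨a, hA, hP⟩ := Set.mem_iUnion.1 hω
  obtain ⟨a', hA', hP'⟩ := Set.mem_iUnion.1 hω'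
  have hac : a = a' := AEv_unique S n a a' ω hA hA'
  subst hac
  obtain ⟨i, hi, hWne⟩ := W_conflict h1 h2
  exact hWne ((hP i hi).symm.trans (hP' i (by omega)))

lemma BSet_disj (n : ℕ) {l l' : ℕ} (h1 : 1 ≤ l) (h1' : 1 ≤ l') (hne : l ≠ l') :
    Disjoint (BSet S n l) (BSet S n l') := by
  rcases lt_or_gt_of_ne hne with h | h
  · exact BSet_disj_aux S n h1 h
  · exact (BSet_disj_aux S n h1' h).symm

lemma BSet_measurable (hmeas : ∀ i, Measurable (S i)) (n l : ℕ) :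
    MeasurableSet (BSet S n l) :=
  MeasurableSet.iUnion (fun a =>
    (det_measurable S hmeas (det_AEv S n a)).inter
      (det_measurable S hmeas (det_PatE S a l)))

include hmeas hindep hfair

lemma BSet_union_one (n : ℕ) : μ (⋃ l : ℕ, BSet S n (l+1)) = 1 := by
  rw [measure_iUnion
    (fun l l' hne => BSet_disj S n (by omega) (by omega) (by omega))
    (fun l => BSet_measurable S hmeas n (l+1))]
  have hterm : ∀ l : ℕ, μ (BSet S n (l+1)) = (1/2 : ENNReal)^l * (1/2) := by
    intro l
    rw [BSet_meas_eq μ S hmeas hindep hfair n (l+1), pow_succ]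
  rw [tsum_congr hterm, ENNReal.tsum_mul_right, ENNReal.tsum_geometric, one_div,
    ENNReal.one_sub_inv_two, inv_inv, ENNReal.mul_inv_cancel two_ne_zero ENNReal.ofNat_ne_top]

lemma part2 (n : ℕ) :
    (∫ ω, ((meetingTime S (n+1) ω : ℝ) - (meetingTime S n ω : ℝ)) ∂μ) = 4 := by
  have hmB : ∀ l : ℕ, MeasurableSet (BSet S n (l+1)) :=
    fun l => BSet_measurable S hmeas n (l+1)
  set f : ℕ → Ω → ℝ := fun l => (BSet S n (l+1)).indicator (fun _ => (2*((l:ℝ)+1))) with hf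
  have hB0 : μ (⋃ l : ℕ, BSet S n (l+1))ᶜ = 0 :=
    (prob_compl_eq_zero_iff (MeasurableSet.iUnion hmB)).2
      (BSet_union_one μ S hmeas hindep hfair n)
  have hNc : μ ((Good S) ∩ ⋃ l : ℕ, BSet S n (l+1))ᶜ = 0 := by
    refine le_antisymm ?_ zero_le
    calc μ ((Good S) ∩ ⋃ l : ℕ, BSet S n (l+1))ᶜ
        ≤ μ (Good S)ᶜ + μ (⋃ l : ℕ, BSet S n (l+1))ᶜ := by
          rw [Set.compl_inter]; exact measure_union_le _ _
      _ = 0 := by rw [good_null μ S hmeas hindep hfair, hB0, add_zero]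
  have hmem : ∀ᵐ ω ∂μ, ω ∈ (Good S) ∩ ⋃ l : ℕ, BSet S n (l+1) := by
    rw [ae_iff]
    exact hNc
  have hXae : (fun ω => ((meetingTime S (n+1) ω : ℝ) - (meetingTime S n ω : ℝ)))
      =ᵐ[μ] (fun ω => ∑' l : ℕ, f l ω) := by
    refine hmem.mono ?_
    intro ω hω
    obtain ⟨hg, hU⟩ := hω
    obtain ⟨l, hl⟩ := Set.mem_iUnion.1 hU
    have hτ : meetingTime S (n+1) ω = meetingTime S n ω + 2*(l+1) := by
      have hmm : ω ∈ {ω | meetingTime S (n+1) ω = meetingTime S n ω + 2*(l+1)} ∩ Good S := by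
        rw [main_eq S n (l+1) (by omega)]
        exact ⟨Set.mem_iUnion.2 ⟨_, (Set.mem_iUnion.1 hl).choose_spec⟩, hg⟩
      exact hmm.1
    have hXv : ((meetingTime S (n+1) ω : ℝ) - (meetingTime S n ω : ℝ)) = 2*((l:ℝ)+1) := by
      rw [hτ]; push_cast; ring
    show ((meetingTime S (n+1) ω : ℝ) - (meetingTime S n ω : ℝ)) = ∑' l : ℕ, f l ω
    rw [hXv, tsum_eq_single l ?_]
    · rw [hf]; simp only [Set.indicator_of_mem hl]
    · intro k hk
      have hnot : ω ∉ BSet S n (k+1) := by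
        intro hbad
        exact (Set.disjoint_left.1
          (BSet_disj S n (by omega) (by omega) (by omega : k+1 ≠ l+1)) hbad) hl
      rw [hf]; simp only [Set.indicator_of_notMem hnot]
  rw [integral_congr_ae hXae]
  have hs1 : Summable (fun l : ℕ => (l : ℝ) * (2⁻¹)^l) := by
    simpa using summable_pow_mul_geometric_of_norm_lt_one (R := ℝ) 1 (r := 2⁻¹) (by norm_num)
  have hs2 : Summable (fun l : ℕ => ((2:ℝ)⁻¹)^l) :=
    summable_geometric_of_lt_one (by norm_num) (by norm_num)
  have hsumR : Summable (fun l : ℕ => (2*((l:ℝ)+1)) * (2⁻¹)^(l+1)) := by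
    refine (hs1.add hs2).congr ?_
    intro l
    rw [pow_succ]
    ring
  rw [integral_tsum ?_ ?_]
  · have hint : ∀ l : ℕ, ∫ ω, f l ω ∂μ = (2*((l:ℝ)+1)) * (2⁻¹)^(l+1) := by
      intro l
      rw [hf]
      simp only []
      rw [integral_indicator_const _ (hmB l), measureReal_def, BSet_meas_eq μ S hmeas hindep hfair n (l+1),
        one_div, ENNReal.toReal_pow, ENNReal.toReal_inv, smul_eq_mul, mul_comm]
      norm_num
    rw [tsum_congr hint]
    have hterm : ∀ l : ℕ, (2*((l:ℝ)+1)) * (2⁻¹)^(l+1) = (l : ℝ) * (2⁻¹)^l + (2⁻¹)^l := by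
      intro l
      rw [pow_succ]
      ring
    rw [tsum_congr hterm, Summable.tsum_add hs1 hs2,
      tsum_geometric_of_lt_one (by norm_num) (by norm_num),
      show ((2:ℝ)⁻¹) = (2⁻¹ : ℝ) from rfl]
    have hgeo : ∑' (m : ℕ), (m : ℝ) * (2⁻¹:ℝ) ^ m = (2⁻¹:ℝ) / (1 - 2⁻¹)^2 :=
      tsum_coe_mul_geometric_of_norm_lt_one (by norm_num)
    rw [hgeo]
    norm_num
  · intro l
    exact (measurable_const.indicator (hmB l)).aestronglyMeasurable
  · -- lintegral bound
    have hlt : ∀ l : ℕ, (∫⁻ ω, ‖f l ω‖₊ ∂μ)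
        = (‖(2*((l:ℝ)+1))‖₊ : ENNReal) * (1/2 : ENNReal)^(l+1) := by
      intro l
      have hptw : (fun ω => (‖f l ω‖₊ : ENNReal))
          = (BSet S n (l+1)).indicator (fun _ => ((‖(2*((l:ℝ)+1))‖₊ : ENNReal))) := by
        funext ω
        by_cases h : ω ∈ BSet S n (l+1)
        · rw [hf]; simp [Set.indicator_of_mem h]
        · rw [hf]; simp [Set.indicator_of_notMem h]
      rw [hptw, lintegral_indicator_const (hmB l),
        BSet_meas_eq μ S hmeas hindep hfair n (l+1)]
    simp only [enorm_eq_nnnorm]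
    rw [tsum_congr hlt]
    have hcoe : ∀ l : ℕ, (‖(2*((l:ℝ)+1))‖₊ : ENNReal) * (1/2 : ENNReal)^(l+1)
        = ((‖(2*((l:ℝ)+1))‖₊ * (2⁻¹ : ℝ≥0)^(l+1) : ℝ≥0) : ENNReal) := by
      intro l
      symm
      rw [ENNReal.coe_mul, ENNReal.coe_pow, ENNReal.coe_inv (by norm_num), ENNReal.coe_two,
        one_div]
    rw [tsum_congr hcoe, ENNReal.tsum_coe_ne_top_iff_summable]
    rw [← NNReal.summable_coe]
    refine hsumR.congr ?_
    intro l
    push_cast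
    rw [Real.norm_of_nonneg (by positivity)]

end Part2

end TwoWalkerAux

/-- If at each step one of the two walkers is chosen uniformly at random
(independently across steps) to move, then the successive meeting times at the center
satisfy `P[τ_{n+1} - τ_n = 2l] = 2^{-l}` for all `l ≥ 1` and `E[τ_{n+1} - τ_n] = 4`. -/
theorem two_walker_meeting_time_distribution
    {Ω : Type*} [MeasurableSpace Ω] (μ : Measure Ω) [IsProbabilityMeasure μ]
    (S : ℕ → Ω → Bool) (hmeas : ∀ i, Measurable (S i))
    (hindep : iIndepFun S μ)
    (hfair : ∀ i, μ (S i ⁻¹' {true}) = 1 / 2) :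
    (∀ n l : ℕ, 1 ≤ l →
      μ {ω | meetingTime S (n + 1) ω = meetingTime S n ω + 2 * l} =
        (1 / 2 : ENNReal) ^ l) ∧
    (∀ n : ℕ,
      (∫ ω, ((meetingTime S (n + 1) ω : ℝ) - (meetingTime S n ω : ℝ)) ∂μ) = 4) := by
  constructor
  · intro n l hl
    exact TwoWalkerAux.part1 μ S hmeas hindep hfair n l hl
  · intro n
    exact TwoWalkerAux.part2 μ S hmeas hindep hfair n
end
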